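/- arXiv:2601.10888 — 4 statements merged into one kernel-verified Lean document; each statement's English description precedes it below -/
import Mathlib

section
/- The cross-ratio datum T = ((1,2,3,4),(1,2,5,6),(1,3,7,8),(2,4,7,8),(3,4,5,6)) on 8 points has cross-ratio degree exactly 4: there exists a nonzero polynomial q ∈ ℂ[x₁,…,x₅] such that for every (a₁,…,a₅) ∈ (ℂ∖{0,1})⁵ with q(a₁,…,a₅) ≠ 0, the set of tuples (p₁,…,p₈) of pairwise distinct points of ℙ¹(ℂ) with p₁ = ∞, p₂ = 0, p₃ = 1 satisfying CR(p₁,p₂,p₃,p₄)=a₁, CR(p₁,p₂,p₅,p₆)=a₂, CR(p₁,p₃,p₇,p₈)=a₃, CR(p₂,p₄,p₇,p₈)=a₄, CR(p₃,p₄,p₅,p₆)=a₅ has exactly 4 elements. -/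
open OnePoint

/-- Cross-ratio of four points of `ℙ¹(ℂ) = OnePoint ℂ`:
`CR(z₁,z₂,z₃,z₄) = ((z₃−z₁)(z₄−z₂))/((z₃−z₂)(z₄−z₁))` when all points are finite,
extended to one point at infinity by omitting the two factors containing it. -/
noncomputable def CR : OnePoint ℂ → OnePoint ℂ → OnePoint ℂ → OnePoint ℂ → ℂ
  | Option.none,    Option.some z₂, Option.some z₃, Option.some z₄ => (z₄ - z₂) / (z₃ - z₂)
  | Option.some z₁, Option.none,    Option.some z₃, Option.some z₄ => (z₃ - z₁) / (z₄ - z₁)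
  | Option.some z₁, Option.some z₂, Option.none,    Option.some z₄ => (z₄ - z₂) / (z₄ - z₁)
  | Option.some z₁, Option.some z₂, Option.some z₃, Option.none    => (z₃ - z₁) / (z₃ - z₂)
  | Option.some z₁, Option.some z₂, Option.some z₃, Option.some z₄ =>
      ((z₃ - z₁) * (z₄ - z₂)) / ((z₃ - z₂) * (z₄ - z₁))
  | _, _, _, _ => 0

namespace CRdeg4

def mkRes {R : Type*} [CommRing R] (a b c a' b' c' : R) : R :=
  (a*c'-a'*c)^2 - (a*b'-a'*b)*(b*c'-b'*c)

lemma res_cert (a b c a' b' c' x : ℂ) (h1 : a*x^2+b*x+c = 0) (h2 : a'*x^2+b'*x+c' = 0) :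
    (a*c'-a'*c)^2 - (a*b'-a'*b)*(b*c'-b'*c) = 0 := by
  linear_combination (((a'*c - a*c') - (a'*b - a*b')*x)*a' - (a'*b - a*b')*b') * h1
    + ((a'*b - a*b')*b - ((a'*c - a*c') - (a'*b - a*b')*x)*a) * h2

def Fq {R : Type*} [CommRing R] (a0 a1 a2 a3 a4 : R) : R :=
  let A1 := a1*(1-a4); let B1 := a4*(1+a0*a1) - (a0+a1); let C1 := a0*(1-a4)
  let A2 := a2*(1-a3); let B2 := (1-a2-a0) - a3*(1-a2-a0*a2); let C2 := a3*a0*(1-a2)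
  let f9 := A2*(a2-1)^2 + B2*a2*(a2-1) + C2*a2^2
  (B1^2 - 4*A1*C1) * (B2^2 - 4*A2*C2) *
  (A1 + B1 + C1) * (A1*a0^2 + B1*a0 + C1) *
  (A1 + B1*a1 + C1*a1^2) * (A1*a0^2 + B1*a0*a1 + C1*a1^2) *
  (A2 + B2 + C2) * (A2*a0^2 + B2*a0 + C2) *
  f9 * (A2*(a0-1+a2)^2 + B2*a2*(a0-1+a2) + C2*a2^2) *
  mkRes A1 B1 C1 A2 B2 C2 *
  mkRes A1 B1 C1 (A2*a1^2) (B2*a1) C2 *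
  mkRes A1 B1 C1 A2 (2*A2*(a2-1)+B2*a2) f9 *
  mkRes A1 B1 C1 (A2*a1^2) (a1*(2*A2*(a2-1)+B2*a2)) f9

noncomputable def qpoly : MvPolynomial (Fin 5) ℂ :=
  Fq (MvPolynomial.X 0) (MvPolynomial.X 1) (MvPolynomial.X 2) (MvPolynomial.X 3)
    (MvPolynomial.X 4)

lemma eval_qpoly (a : Fin 5 → ℂ) :
    MvPolynomial.eval a qpoly = Fq (a 0) (a 1) (a 2) (a 3) (a 4) := by
  simp [qpoly, Fq, mkRes]

lemma qpoly_ne_zero : qpoly ≠ 0 := by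
  intro h
  have h2 := eval_qpoly (fun _ => 2)
  rw [h] at h2
  simp only [map_zero] at h2
  norm_num [Fq, mkRes] at h2

lemma quad_pair (A B C : ℂ) (hA : A ≠ 0) (hD : B^2 - 4*A*C ≠ 0) :
    ∃ u1 u2 : ℂ, u1 ≠ u2 ∧ ∀ x : ℂ, A*x^2+B*x+C = 0 ↔ x = u1 ∨ x = u2 := by
  obtain ⟨d, hd⟩ := IsAlgClosed.exists_pow_nat_eq (k := ℂ) (B^2 - 4*A*C) two_pos
  have hd0 : d ≠ 0 := by
    intro h; rw [h] at hd; apply hD; rw [← hd]; ring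
  have hdisc : discrim A B C = d * d := by unfold discrim; rw [← hd]; ring
  refine ⟨(-B + d)/(2*A), (-B - d)/(2*A), ?_, fun x => ?_⟩
  case refine_2 =>
    rw [show A*x^2+B*x+C = A*(x*x)+B*x+C by ring]
    exact quadratic_eq_zero_iff hA hdisc x
  intro h
  apply hd0
  have h2A : (2:ℂ)*A ≠ 0 := by simp [hA]
  field_simp at h
  linear_combination (1/2 : ℂ) * h

def Pt (a0 a1 a2 u s : ℂ) : Fin 8 → OnePoint ℂ := fun i =>
  match i with
  | 0 => ∞
  | 1 => ((0:ℂ) : OnePoint ℂ)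
  | 2 => ((1:ℂ) : OnePoint ℂ)
  | 3 => (a0 : OnePoint ℂ)
  | 4 => (u : OnePoint ℂ)
  | 5 => ((a1*u : ℂ) : OnePoint ℂ)
  | 6 => (s : OnePoint ℂ)
  | 7 => ((a2*(s-1)+1 : ℂ) : OnePoint ℂ)

lemma Pt0 (a0 a1 a2 u s : ℂ) : Pt a0 a1 a2 u s 0 = ∞ := rfl
lemma Pt1 (a0 a1 a2 u s : ℂ) : Pt a0 a1 a2 u s 1 = ((0:ℂ) : OnePoint ℂ) := rfl
lemma Pt2 (a0 a1 a2 u s : ℂ) : Pt a0 a1 a2 u s 2 = ((1:ℂ) : OnePoint ℂ) := rfl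
lemma Pt3 (a0 a1 a2 u s : ℂ) : Pt a0 a1 a2 u s 3 = (a0 : OnePoint ℂ) := rfl
lemma Pt4 (a0 a1 a2 u s : ℂ) : Pt a0 a1 a2 u s 4 = (u : OnePoint ℂ) := rfl
lemma Pt5 (a0 a1 a2 u s : ℂ) : Pt a0 a1 a2 u s 5 = ((a1*u : ℂ) : OnePoint ℂ) := rfl
lemma Pt6 (a0 a1 a2 u s : ℂ) : Pt a0 a1 a2 u s 6 = (s : OnePoint ℂ) := rfl
lemma Pt7 (a0 a1 a2 u s : ℂ) : Pt a0 a1 a2 u s 7 = ((a2*(s-1)+1 : ℂ) : OnePoint ℂ) := rfl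

lemma CR_inf (z₂ z₃ z₄ : ℂ) :
    CR ∞ (z₂ : OnePoint ℂ) (z₃ : OnePoint ℂ) (z₄ : OnePoint ℂ) = (z₄ - z₂)/(z₃ - z₂) := rfl
lemma CR_fin (z₁ z₂ z₃ z₄ : ℂ) :
    CR (z₁ : OnePoint ℂ) (z₂ : OnePoint ℂ) (z₃ : OnePoint ℂ) (z₄ : OnePoint ℂ) =
      ((z₃ - z₁)*(z₄ - z₂))/((z₃ - z₂)*(z₄ - z₁)) := rfl

lemma Pt_inj (a0 a1 a2 u s : ℂ)
    (h13 : (0:ℂ) ≠ a0) (h14 : (0:ℂ) ≠ u) (h15 : (0:ℂ) ≠ a1*u) (h16 : (0:ℂ) ≠ s)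
    (h17 : (0:ℂ) ≠ a2*(s-1)+1)
    (h23 : (1:ℂ) ≠ a0) (h24 : (1:ℂ) ≠ u) (h25 : (1:ℂ) ≠ a1*u) (h26 : (1:ℂ) ≠ s)
    (h27 : (1:ℂ) ≠ a2*(s-1)+1)
    (h34 : a0 ≠ u) (h35 : a0 ≠ a1*u) (h36 : a0 ≠ s) (h37 : a0 ≠ a2*(s-1)+1)
    (h45 : u ≠ a1*u) (h46 : u ≠ s) (h47 : u ≠ a2*(s-1)+1)
    (h56 : a1*u ≠ s) (h57 : a1*u ≠ a2*(s-1)+1)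
    (h67 : s ≠ a2*(s-1)+1) :
    Function.Injective (Pt a0 a1 a2 u s) := by
  intro i j h
  fin_cases i <;> fin_cases j <;>
    simp_all [Pt, OnePoint.infty_ne_coe, OnePoint.coe_ne_infty, OnePoint.coe_eq_coe]

def Sol (a : Fin 5 → ℂ) : Set (Fin 8 → OnePoint ℂ) :=
  {p | Function.Injective p ∧ p 0 = ∞ ∧ p 1 = ((0 : ℂ) : OnePoint ℂ) ∧
    p 2 = ((1 : ℂ) : OnePoint ℂ) ∧
    CR (p 0) (p 1) (p 2) (p 3) = a 0 ∧
    CR (p 0) (p 1) (p 4) (p 5) = a 1 ∧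
    CR (p 0) (p 2) (p 6) (p 7) = a 2 ∧
    CR (p 1) (p 3) (p 6) (p 7) = a 3 ∧
    CR (p 2) (p 3) (p 4) (p 5) = a 4}

lemma main_aux (a : Fin 5 → ℂ) (ha : ∀ i, a i ≠ 0 ∧ a i ≠ 1)
    (hq : MvPolynomial.eval a qpoly ≠ 0) :
    (Sol a).Finite ∧ (Sol a).ncard = 4 := by
  obtain ⟨h00, h01⟩ := ha 0
  obtain ⟨h10, h11⟩ := ha 1
  obtain ⟨h20, h21⟩ := ha 2
  obtain ⟨h30, h31⟩ := ha 3
  obtain ⟨h40, h41⟩ := ha 4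
  have hF : Fq (a 0) (a 1) (a 2) (a 3) (a 4) ≠ 0 := by rw [← eval_qpoly]; exact hq
  simp only [Fq, mkRes, mul_ne_zero_iff] at hF
  obtain ⟨⟨⟨⟨⟨⟨⟨⟨⟨⟨⟨⟨⟨hf1,hf2⟩,hf3⟩,hf4⟩,hf5⟩,hf6⟩,hf7⟩,hf8⟩,hf9⟩,hf10⟩,hf11⟩,hf12⟩,hf13⟩,hf14⟩ := hF
  have h1A : a 1 * (1 - a 4) ≠ 0 := mul_ne_zero h10 (sub_ne_zero.2 (Ne.symm h41))
  have h2A : a 2 * (1 - a 3) ≠ 0 := mul_ne_zero h20 (sub_ne_zero.2 (Ne.symm h31))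
  have hC1 : a 0 * (1 - a 4) ≠ 0 := mul_ne_zero h00 (sub_ne_zero.2 (Ne.symm h41))
  have hC2 : a 3 * a 0 * (1 - a 2) ≠ 0 :=
    mul_ne_zero (mul_ne_zero h30 h00) (sub_ne_zero.2 (Ne.symm h21))
  obtain ⟨u1, u2, hu12, hQ1⟩ := quad_pair _ _ _ h1A hf1
  obtain ⟨s1, s2, hs12, hQ2⟩ := quad_pair _ _ _ h2A hf2
  -- backward direction: any pair of roots gives a solution
  have hmem : ∀ u s : ℂ,
      (a 1*(1-a 4))*u^2 + (a 4*(1+a 0*a 1) - (a 0+a 1))*u + a 0*(1-a 4) = 0 →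
      (a 2*(1-a 3))*s^2 + ((1-a 2-a 0) - a 3*(1-a 2-a 0*a 2))*s + a 3*a 0*(1-a 2) = 0 →
      Pt (a 0) (a 1) (a 2) u s ∈ Sol a := by
    intro u s hQu hQs
    have hu0 : u ≠ 0 := by intro h; subst h; exact hC1 (by linear_combination hQu)
    have hu1 : u ≠ 1 := by intro h; subst h; exact hf3 (by linear_combination hQu)
    have hua : u ≠ a 0 := by intro h; subst h; exact hf4 (by linear_combination hQu)
    have hv0 : a 1 * u ≠ 0 := mul_ne_zero h10 hu0
    have hv1 : a 1 * u ≠ 1 := by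
      intro h
      exact hf5 (by linear_combination (a 1)^2 * hQu -
        ((a 1*(1-a 4))*(1+a 1*u) + (a 4*(1+a 0*a 1) - (a 0+a 1))*a 1) * h)
    have hva : a 1 * u ≠ a 0 := by
      intro h
      exact hf6 (by linear_combination (a 1)^2 * hQu -
        ((a 1*(1-a 4))*(a 1*u + a 0) + (a 4*(1+a 0*a 1) - (a 0+a 1))*a 1) * h)
    have hvu : a 1 * u ≠ u := by
      intro h
      have h2 : (a 1 - 1) * u = 0 := by linear_combination h
      rcases mul_eq_zero.1 h2 with h3 | h3
      · exact h11 (by linear_combination h3)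
      · exact hu0 h3
    have hs0 : s ≠ 0 := by intro h; subst h; exact hC2 (by linear_combination hQs)
    have hs1 : s ≠ 1 := by intro h; subst h; exact hf7 (by linear_combination hQs)
    have hsa : s ≠ a 0 := by intro h; subst h; exact hf8 (by linear_combination hQs)
    have hsu : s ≠ u := by
      intro h; subst h
      exact hf11 (res_cert _ _ _ _ _ _ s hQu hQs)
    have hsv : s ≠ a 1 * u := by
      intro h; subst h
      have h2 : ((a 2*(1-a 3))*(a 1)^2)*u^2 + (((1-a 2-a 0) - a 3*(1-a 2-a 0*a 2))*(a 1))*u +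
          a 3*a 0*(1-a 2) = 0 := by linear_combination hQs
      exact hf12 (res_cert _ _ _ _ _ _ u hQu h2)
    have ht0 : a 2*(s-1)+1 ≠ 0 := by
      intro h
      exact hf9 (by linear_combination (a 2)^2*hQs -
        ((a 2*(1-a 3))*(a 2*s + a 2 - 1) + ((1-a 2-a 0) - a 3*(1-a 2-a 0*a 2))*a 2)*h)
    have ht1 : a 2*(s-1)+1 ≠ 1 := by
      intro h
      have h2 : a 2*(s-1) = 0 := by linear_combination h
      rcases mul_eq_zero.1 h2 with h3 | h3
      · exact h20 h3
      · exact hs1 (by linear_combination h3)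
    have hta : a 2*(s-1)+1 ≠ a 0 := by
      intro h
      exact hf10 (by linear_combination (a 2)^2*hQs -
        ((a 2*(1-a 3))*(a 2*s + a 0 - 1 + a 2) + ((1-a 2-a 0) - a 3*(1-a 2-a 0*a 2))*a 2)*h)
    have hts : a 2*(s-1)+1 ≠ s := by
      intro h
      have h2 : (a 2 - 1)*(s - 1) = 0 := by linear_combination h
      rcases mul_eq_zero.1 h2 with h3 | h3
      · exact h21 (by linear_combination h3)
      · exact hs1 (by linear_combination h3)
    have htu : a 2*(s-1)+1 ≠ u := by
      intro h
      have h2 : (a 2*(1-a 3))*u^2 +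
          (2*(a 2*(1-a 3))*(a 2-1)+((1-a 2-a 0) - a 3*(1-a 2-a 0*a 2))*a 2)*u +
          ((a 2*(1-a 3))*(a 2-1)^2 + ((1-a 2-a 0) - a 3*(1-a 2-a 0*a 2))*a 2*(a 2-1) +
            (a 3*a 0*(1-a 2))*a 2^2) = 0 := by
        linear_combination (a 2)^2*hQs -
          ((a 2*(1-a 3))*(u - 1 + a 2 + a 2*s) + ((1-a 2-a 0) - a 3*(1-a 2-a 0*a 2))*a 2)*h
      exact hf13 (res_cert _ _ _ _ _ _ u hQu h2)
    have htv : a 2*(s-1)+1 ≠ a 1*u := by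
      intro h
      have h2 : ((a 2*(1-a 3))*(a 1)^2)*u^2 +
          ((a 1)*(2*(a 2*(1-a 3))*(a 2-1)+((1-a 2-a 0) - a 3*(1-a 2-a 0*a 2))*a 2))*u +
          ((a 2*(1-a 3))*(a 2-1)^2 + ((1-a 2-a 0) - a 3*(1-a 2-a 0*a 2))*a 2*(a 2-1) +
            (a 3*a 0*(1-a 2))*a 2^2) = 0 := by
        linear_combination (a 2)^2*hQs -
          ((a 2*(1-a 3))*(a 1*u - 1 + a 2 + a 2*s) + ((1-a 2-a 0) - a 3*(1-a 2-a 0*a 2))*a 2)*h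
      exact hf14 (res_cert _ _ _ _ _ _ u hQu h2)
    refine ⟨?_, rfl, rfl, rfl, ?_, ?_, ?_, ?_, ?_⟩
    · exact Pt_inj _ _ _ _ _ (Ne.symm h00) (Ne.symm hu0) (Ne.symm hv0) (Ne.symm hs0)
        (Ne.symm ht0) (Ne.symm h01) (Ne.symm hu1) (Ne.symm hv1) (Ne.symm hs1) (Ne.symm ht1)
        (Ne.symm hua) (Ne.symm hva) (Ne.symm hsa) (Ne.symm hta) (Ne.symm hvu) (Ne.symm hsu)
        (Ne.symm htu) (Ne.symm hsv) (Ne.symm htv) (Ne.symm hts)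
    · rw [Pt0, Pt1, Pt2, Pt3, CR_inf]
      simp
    · rw [Pt0, Pt1, Pt4, Pt5, CR_inf]
      rw [div_eq_iff (by rw [sub_zero]; exact hu0)]
      ring
    · rw [Pt0, Pt2, Pt6, Pt7, CR_inf]
      rw [div_eq_iff (sub_ne_zero.2 hs1)]
      ring
    · rw [Pt1, Pt3, Pt6, Pt7, CR_fin]
      rw [div_eq_iff (mul_ne_zero (sub_ne_zero.2 hsa) (by rw [sub_zero]; exact ht0))]
      linear_combination hQs
    · rw [Pt2, Pt3, Pt4, Pt5, CR_fin]
      rw [div_eq_iff (mul_ne_zero (sub_ne_zero.2 hua) (sub_ne_zero.2 hv1))]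
      linear_combination hQu
  -- forward direction
  have hmem' : ∀ p ∈ Sol a, ∃ u s : ℂ,
      ((a 1*(1-a 4))*u^2 + (a 4*(1+a 0*a 1) - (a 0+a 1))*u + a 0*(1-a 4) = 0) ∧
      ((a 2*(1-a 3))*s^2 + ((1-a 2-a 0) - a 3*(1-a 2-a 0*a 2))*s + a 3*a 0*(1-a 2) = 0) ∧
      p = Pt (a 0) (a 1) (a 2) u s := by
    rintro p ⟨hinj, h0, h1, h2, e1, e2, e3, e4, e5⟩
    have hne : ∀ (i j : Fin 8), i ≠ j → p i ≠ p j := fun i j hij h => hij (hinj h)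
    obtain ⟨z3, hp3⟩ : ∃ z : ℂ, p 3 = (z : OnePoint ℂ) := by
      rcases hx : (p 3 : Option ℂ) with _ | z
      · exfalso; apply h00; rw [← e1, h0, h1, h2, hx]; rfl
      · exact ⟨z, rfl⟩
    obtain ⟨z4, hp4⟩ : ∃ z : ℂ, p 4 = (z : OnePoint ℂ) := by
      rcases hx : (p 4 : Option ℂ) with _ | z
      · exfalso; apply h10; rw [← e2, h0, h1, hx]
        rcases (p 5 : Option ℂ) with _ | w <;> rfl
      · exact ⟨z, rfl⟩
    obtain ⟨z5, hp5⟩ : ∃ z : ℂ, p 5 = (z : OnePoint ℂ) := by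
      rcases hx : (p 5 : Option ℂ) with _ | z
      · exfalso; apply h10; rw [← e2, h0, h1, hp4, hx]; rfl
      · exact ⟨z, rfl⟩
    obtain ⟨z6, hp6⟩ : ∃ z : ℂ, p 6 = (z : OnePoint ℂ) := by
      rcases hx : (p 6 : Option ℂ) with _ | z
      · exfalso; apply h20; rw [← e3, h0, h2, hx]
        rcases (p 7 : Option ℂ) with _ | w <;> rfl
      · exact ⟨z, rfl⟩
    obtain ⟨z7, hp7⟩ : ∃ z : ℂ, p 7 = (z : OnePoint ℂ) := by
      rcases hx : (p 7 : Option ℂ) with _ | z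
      · exfalso; apply h20; rw [← e3, h0, h2, hp6, hx]; rfl
      · exact ⟨z, rfl⟩
    rw [h0, h1, h2, hp3, CR_inf] at e1
    rw [h0, h1, hp4, hp5, CR_inf] at e2
    rw [h0, h2, hp6, hp7, CR_inf] at e3
    rw [h1, hp3, hp6, hp7, CR_fin] at e4
    rw [h2, hp3, hp4, hp5, CR_fin] at e5
    have hz40 : z4 ≠ 0 := by
      intro h; apply hne 4 1 (by decide); rw [hp4, h1, h]
    have hz61 : z6 ≠ 1 := by
      intro h; apply hne 6 2 (by decide); rw [hp6, h2, h]
    have hz63 : z6 ≠ z3 := by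
      intro h; apply hne 6 3 (by decide); rw [hp6, hp3, h]
    have hz70 : z7 ≠ 0 := by
      intro h; apply hne 7 1 (by decide); rw [hp7, h1, h]
    have hz43 : z4 ≠ z3 := by
      intro h; apply hne 4 3 (by decide); rw [hp4, hp3, h]
    have hz51 : z5 ≠ 1 := by
      intro h; apply hne 5 2 (by decide); rw [hp5, h2, h]
    have hz3 : z3 = a 0 := by simpa using e1
    subst hz3
    have hz5 : z5 = a 1 * z4 := by
      rw [div_eq_iff (by rw [sub_zero]; exact hz40)] at e2
      linear_combination e2
    subst hz5
    have hz7 : z7 = a 2*(z6 - 1)+1 := by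
      rw [div_eq_iff (sub_ne_zero.2 hz61)] at e3
      linear_combination e3
    subst hz7
    have hQu : (a 1*(1-a 4))*z4^2 + (a 4*(1+a 0*a 1) - (a 0+a 1))*z4 + a 0*(1-a 4) = 0 := by
      rw [div_eq_iff (mul_ne_zero (sub_ne_zero.2 hz43) (sub_ne_zero.2 hz51))] at e5
      linear_combination e5
    have hQs : (a 2*(1-a 3))*z6^2 + ((1-a 2-a 0) - a 3*(1-a 2-a 0*a 2))*z6 + a 3*a 0*(1-a 2) = 0 := by
      rw [div_eq_iff (mul_ne_zero (sub_ne_zero.2 hz63) (by rw [sub_zero]; exact hz70))] at e4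
      linear_combination e4
    refine ⟨z4, z6, hQu, hQs, ?_⟩
    funext i
    fin_cases i
    · exact h0
    · exact h1
    · exact h2
    · exact hp3
    · exact hp4
    · exact hp5
    · exact hp6
    · exact hp7
  have hPtne : ∀ {u s u' s' : ℂ}, Pt (a 0) (a 1) (a 2) u s = Pt (a 0) (a 1) (a 2) u' s' →
      u = u' ∧ s = s' := by
    intro u s u' s' h
    have h4 : (u : OnePoint ℂ) = (u' : OnePoint ℂ) := congrFun h 4
    have h6 : (s : OnePoint ℂ) = (s' : OnePoint ℂ) := congrFun h 6
    exact ⟨OnePoint.coe_eq_coe.1 h4, OnePoint.coe_eq_coe.1 h6⟩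
  have hSol : Sol a = {Pt (a 0) (a 1) (a 2) u1 s1, Pt (a 0) (a 1) (a 2) u1 s2,
      Pt (a 0) (a 1) (a 2) u2 s1, Pt (a 0) (a 1) (a 2) u2 s2} := by
    ext p
    constructor
    · intro hp
      obtain ⟨u, s, hu, hs, rfl⟩ := hmem' p hp
      rcases (hQ1 u).1 hu with rfl | rfl <;> rcases (hQ2 s).1 hs with rfl | rfl <;> simp
    · intro hp
      rcases hp with rfl | rfl | rfl | rfl
      · exact hmem u1 s1 ((hQ1 u1).2 (Or.inl rfl)) ((hQ2 s1).2 (Or.inl rfl))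
      · exact hmem u1 s2 ((hQ1 u1).2 (Or.inl rfl)) ((hQ2 s2).2 (Or.inr rfl))
      · exact hmem u2 s1 ((hQ1 u2).2 (Or.inr rfl)) ((hQ2 s1).2 (Or.inl rfl))
      · exact hmem u2 s2 ((hQ1 u2).2 (Or.inr rfl)) ((hQ2 s2).2 (Or.inr rfl))
  have hn1 : Pt (a 0) (a 1) (a 2) u1 s1 ∉ ({Pt (a 0) (a 1) (a 2) u1 s2,
      Pt (a 0) (a 1) (a 2) u2 s1, Pt (a 0) (a 1) (a 2) u2 s2} : Set (Fin 8 → OnePoint ℂ)) := by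
    simp only [Set.mem_insert_iff, Set.mem_singleton_iff]
    push_neg
    exact ⟨fun h => hs12 (hPtne h).2, fun h => hu12 (hPtne h).1, fun h => hu12 (hPtne h).1⟩
  have hn2 : Pt (a 0) (a 1) (a 2) u1 s2 ∉ ({Pt (a 0) (a 1) (a 2) u2 s1,
      Pt (a 0) (a 1) (a 2) u2 s2} : Set (Fin 8 → OnePoint ℂ)) := by
    simp only [Set.mem_insert_iff, Set.mem_singleton_iff]
    push_neg
    exact ⟨fun h => hu12 (hPtne h).1, fun h => hu12 (hPtne h).1⟩
  have hn3 : Pt (a 0) (a 1) (a 2) u2 s1 ∉ ({Pt (a 0) (a 1) (a 2) u2 s2} :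
      Set (Fin 8 → OnePoint ℂ)) := by
    simp only [Set.mem_singleton_iff]
    exact fun h => hs12 (hPtne h).2
  constructor
  · rw [hSol]
    exact (((Set.finite_singleton _).insert _).insert _).insert _
  · rw [hSol, Set.ncard_insert_of_notMem hn1, Set.ncard_insert_of_notMem hn2,
      Set.ncard_insert_of_notMem hn3, Set.ncard_singleton]

end CRdeg4

open CRdeg4 in
theorem crossRatioDegree_eq_four_T1 :
    ∃ q : MvPolynomial (Fin 5) ℂ, q ≠ 0 ∧
      ∀ a : Fin 5 → ℂ, (∀ i, a i ≠ 0 ∧ a i ≠ 1) → MvPolynomial.eval a q ≠ 0 →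
        let S : Set (Fin 8 → OnePoint ℂ) :=
          {p | Function.Injective p ∧ p 0 = ∞ ∧ p 1 = ((0 : ℂ) : OnePoint ℂ) ∧
            p 2 = ((1 : ℂ) : OnePoint ℂ) ∧
            CR (p 0) (p 1) (p 2) (p 3) = a 0 ∧
            CR (p 0) (p 1) (p 4) (p 5) = a 1 ∧
            CR (p 0) (p 2) (p 6) (p 7) = a 2 ∧
            CR (p 1) (p 3) (p 6) (p 7) = a 3 ∧
            CR (p 2) (p 3) (p 4) (p 5) = a 4}
        S.Finite ∧ S.ncard = 4 :=
  ⟨qpoly, qpoly_ne_zero, fun a ha hq => main_aux a ha hq⟩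
end

section
/- The cross-ratio datum T = ((1,2,3,5),(1,2,4,6),(1,3,7,8),(2,4,7,8),(3,4,5,6)) on 8 points has cross-ratio degree exactly 4: there exists a nonzero polynomial q ∈ ℂ[x₁,…,x₅] such that for every (a₁,…,a₅) ∈ (ℂ∖{0,1})⁵ with q(a₁,…,a₅) ≠ 0, the set of tuples (p₁,…,p₈) of pairwise distinct points of ℙ¹(ℂ) with p₁ = ∞, p₂ = 0, p₃ = 1 satisfying CR(p₁,p₂,p₃,p₅)=a₁, CR(p₁,p₂,p₄,p₆)=a₂, CR(p₁,p₃,p₇,p₈)=a₃, CR(p₂,p₄,p₇,p₈)=a₄, CR(p₃,p₄,p₅,p₆)=a₅ has exactly 4 elements. -/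
open OnePoint

lemma CR_infty (z2 z3 z4 : ℂ) : CR ∞ z2 z3 z4 = (z4 - z2)/(z3 - z2) := rfl
lemma CR_coe (z1 z2 z3 z4 : ℂ) : CR z1 z2 z3 z4 = ((z3-z1)*(z4-z2))/((z3-z2)*(z4-z1)) := rfl

section Gadgets

/-- The quadratic in `w` encoding the fifth cross-ratio equation. -/
def Qw (a0 a1 a4 w : ℂ) : ℂ := a1 * a4 * (w * w) + ((1) - a4 - a1 - a0 + a0 * a1 - a0 * a1 * a4) * w + a0 * a4

/-- The quadratic in `u` encoding the third and fourth cross-ratio equations. -/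
def Qu (a2 a3 w u : ℂ) : ℂ := (a2 - a2 * a3) * (u * u) + ((1) - w - a3 - a2 + a2 * a3 + a2 * a3 * w) * u + (a3 * w - a2 * a3 * w)

/-- Resultant-like gadget. -/
def Rg {R : Type*} [CommRing R] (a0 a1 a4 al be : R) : R :=
  a1 * a4 * al ^ 2 - ((1) - a4 - a1 - a0 + a0 * a1 - a0 * a1 * a4) * al * be + a0 * a4 * be ^ 2

lemma res_cert {a0 a1 a4 w al be : ℂ} (hQ : Qw a0 a1 a4 w = 0) (hlin : al + be * w = 0) :
    Rg a0 a1 a4 al be = 0 := by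
  simp only [Qw] at hQ
  simp only [Rg]
  linear_combination be ^ 2 * hQ - (a1 * a4 * be * w + ((1) - a4 - a1 - a0 + a0 * a1 - a0 * a1 * a4) * be - a1 * a4 * al) * hlin

def R0e {R : Type*} [CommRing R] (a0 a1 a4 : R) : R :=
  ((1) - a4 - a1 - a0 + a0 * a1 - a0 * a1 * a4) ^ 2 - 4 * (a1 * a4) * (a0 * a4)

def R1e {R : Type*} [CommRing R] (a0 a1 a2 a3 a4 : R) : R :=
  Rg a0 a1 a4 (a0 - a0 * a3 - a0 * a2 + a0 * a2 * a3 + a0 ^ 2 * a2 - a0 ^ 2 * a2 * a3) (a3 - a2 * a3 - a0 + a0 * a2 * a3)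

def R2e {R : Type*} [CommRing R] (a0 a1 a2 a3 a4 : R) : R :=
  Rg a0 a1 a4 (a3 - a2 * a3 + a1 - a1 * a3 - a1 * a2 + a1 * a2 * a3) (-(a1) + a1 * a2 * a3 + a1 ^ 2 * a2 - a1 ^ 2 * a2 * a3)

def R3e {R : Type*} [CommRing R] (a0 a1 a2 a3 a4 : R) : R :=
  Rg a0 a1 a4 (-(a0 * a2) + a0 * a2 * a3 + a0 * a2 ^ 2 - a0 * a2 ^ 2 * a3 + a0 ^ 2 * a2 - a0 ^ 2 * a2 * a3) (a2 - a2 ^ 2 - a0 * a2 + a0 * a2 ^ 2 * a3)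

def R4e {R : Type*} [CommRing R] (a0 a1 a2 a3 a4 : R) : R :=
  Rg a0 a1 a4 (a0 * a1 * a2 * a4 - a0 * a1 * a2 ^ 2 * a3 * a4 - a0 * a1 ^ 2 * a2 * a4 + a0 * a1 ^ 2 * a2 * a3 * a4) (a1 * a2 - a1 * a2 ^ 2 * a4 - a1 * a2 ^ 2 * a3 + a1 * a2 ^ 2 * a3 * a4 + (-2) * a1 ^ 2 * a2 + a1 ^ 2 * a2 * a3 + a1 ^ 2 * a2 ^ 2 * a4 + a1 ^ 2 * a2 ^ 2 * a3 - a1 ^ 2 * a2 ^ 2 * a3 * a4 + a1 ^ 3 * a2 - a1 ^ 3 * a2 * a3 - a0 * a1 * a2 + a0 * a1 * a2 ^ 2 * a3 + (2) * a0 * a1 ^ 2 * a2 - a0 * a1 ^ 2 * a2 * a4 - a0 * a1 ^ 2 * a2 * a3 - a0 * a1 ^ 2 * a2 ^ 2 * a3 + a0 * a1 ^ 2 * a2 ^ 2 * a3 * a4 - a0 * a1 ^ 3 * a2 + a0 * a1 ^ 3 * a2 * a4 + a0 * a1 ^ 3 * a2 * a3 - a0 * a1 ^ 3 * a2 * a3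 * a4)

def R5e {R : Type*} [CommRing R] (a0 a1 a2 a3 a4 : R) : R :=
  Rg a0 a1 a4 (a1 * a4 + (-2) * a1 * a3 * a4 + a1 * a3 ^ 2 * a4 + (-2) * a1 * a2 * a4 + (4) * a1 * a2 * a3 * a4 + (-2) * a1 * a2 * a3 ^ 2 * a4 + a1 * a2 ^ 2 * a4 + (-2) * a1 * a2 ^ 2 * a3 * a4 + a1 * a2 ^ 2 * a3 ^ 2 * a4 - a0 * a4 + (2) * a0 * a2 * a3 * a4 - a0 * a2 ^ 2 * a3 ^ 2 * a4) ((-1) + a4 + (2) * a2 * a3 + (-2) * a2 * a3 * a4 - a2 ^ 2 * a3 ^ 2 + a2 ^ 2 * a3 ^ 2 * a4 + a1 + (-2) * a1 * a4 + (2) * a1 * a3 * a4 + (2) * a1 * a2 * a4 + (-2) * a1 * a2 * a3 + (-4) * a1 * a2 * a3 * a4 + (2) * a1 * a2 * a3 ^ 2 * a4 + (2) * a1 * a2 ^ 2 * a3 * a4 + a1 * a2 ^ 2 * a3 ^ 2 + (-2) * a1 * a2 ^ 2 * a3 ^ 2 * a4 + a0 + (-2) * a0 * a2 * a3 + a0 *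 a2 ^ 2 * a3 ^ 2 - a0 * a1 + a0 * a1 * a4 + (2) * a0 * a1 * a2 * a3 + (-2) * a0 * a1 * a2 * a3 * a4 - a0 * a1 * a2 ^ 2 * a3 ^ 2 + a0 * a1 * a2 ^ 2 * a3 ^ 2 * a4)

noncomputable def qpoly : MvPolynomial (Fin 5) ℂ :=
  R0e (MvPolynomial.X 0) (MvPolynomial.X 1) (MvPolynomial.X 4) *
  R1e (MvPolynomial.X 0) (MvPolynomial.X 1) (MvPolynomial.X 2) (MvPolynomial.X 3) (MvPolynomial.X 4) *
  R2e (MvPolynomial.X 0) (MvPolynomial.X 1) (MvPolynomial.X 2) (MvPolynomial.X 3) (MvPolynomial.X 4) *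
  R3e (MvPolynomial.X 0) (MvPolynomial.X 1) (MvPolynomial.X 2) (MvPolynomial.X 3) (MvPolynomial.X 4) *
  R4e (MvPolynomial.X 0) (MvPolynomial.X 1) (MvPolynomial.X 2) (MvPolynomial.X 3) (MvPolynomial.X 4) *
  R5e (MvPolynomial.X 0) (MvPolynomial.X 1) (MvPolynomial.X 2) (MvPolynomial.X 3) (MvPolynomial.X 4)

lemma heval (b : Fin 5 → ℂ) :
    MvPolynomial.eval b qpoly =
      R0e (b 0) (b 1) (b 4) * R1e (b 0) (b 1) (b 2) (b 3) (b 4) *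
      R2e (b 0) (b 1) (b 2) (b 3) (b 4) * R3e (b 0) (b 1) (b 2) (b 3) (b 4) *
      R4e (b 0) (b 1) (b 2) (b 3) (b 4) * R5e (b 0) (b 1) (b 2) (b 3) (b 4) := by
  simp only [qpoly, R0e, R1e, R2e, R3e, R4e, R5e, Rg, map_mul, map_add, map_sub, map_pow,
    map_neg, map_one, map_ofNat, MvPolynomial.eval_X]

end Gadgets

section Props

variable {a0 a1 a2 a3 a4 w u : ℂ}

lemma wprops (h00 : a0 ≠ 0) (h01 : a0 ≠ 1) (h10 : a1 ≠ 0) (h11 : a1 ≠ 1)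
    (h40 : a4 ≠ 0) (h41 : a4 ≠ 1) (hQ : Qw a0 a1 a4 w = 0) :
    w ≠ 0 ∧ w ≠ 1 ∧ w ≠ a0 ∧ a1*w ≠ 0 ∧ a1*w ≠ 1 ∧ a1*w ≠ a0 ∧ a1*w ≠ w := by
  have hw0 : w ≠ 0 := by
    intro h; subst h
    simp only [Qw] at hQ
    exact mul_ne_zero h00 h40 (by linear_combination hQ)
  refine ⟨hw0, ?_, ?_, mul_ne_zero h10 hw0, ?_, ?_, ?_⟩
  · intro h; subst h
    simp only [Qw] at hQ
    exact mul_ne_zero (mul_ne_zero (sub_ne_zero.mpr h01) (sub_ne_zero.mpr h11))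
      (sub_ne_zero.mpr (Ne.symm h41)) (by linear_combination hQ)
  · intro h
    rw [h] at hQ
    simp only [Qw] at hQ
    exact mul_ne_zero (mul_ne_zero h00 (sub_ne_zero.mpr h01)) (sub_ne_zero.mpr h11)
      (by linear_combination hQ)
  · intro h
    have hlin : (-1 : ℂ) + a1 * w = 0 := by linear_combination h
    have h2 := res_cert hQ hlin
    simp only [Rg] at h2
    exact mul_ne_zero h10 (mul_ne_zero (sub_ne_zero.mpr (Ne.symm h01))
      (sub_ne_zero.mpr (Ne.symm h11))) (by linear_combination h2)
  · intro h
    have hlin : (-a0) + a1 * w = 0 := by linear_combination h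
    have h2 := res_cert hQ hlin
    simp only [Rg] at h2
    exact mul_ne_zero (mul_ne_zero (mul_ne_zero (mul_ne_zero h00 h10)
      (sub_ne_zero.mpr h01)) (sub_ne_zero.mpr h11)) (sub_ne_zero.mpr (Ne.symm h41))
      (by linear_combination h2)
  · intro h
    have h2 : (a1 - 1) * w = 0 := by linear_combination h
    rcases mul_eq_zero.mp h2 with h3 | h3
    · exact h11 (by linear_combination h3)
    · exact hw0 h3

lemma uprops (h00 : a0 ≠ 0) (h01 : a0 ≠ 1) (h10 : a1 ≠ 0) (h11 : a1 ≠ 1)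
    (h20 : a2 ≠ 0) (h21 : a2 ≠ 1) (h30 : a3 ≠ 0) (h31 : a3 ≠ 1)
    (h40 : a4 ≠ 0) (h41 : a4 ≠ 1)
    (hR1 : R1e a0 a1 a2 a3 a4 ≠ 0) (hR2 : R2e a0 a1 a2 a3 a4 ≠ 0)
    (hR3 : R3e a0 a1 a2 a3 a4 ≠ 0) (hR4 : R4e a0 a1 a2 a3 a4 ≠ 0)
    (hQw : Qw a0 a1 a4 w = 0) (hQu : Qu a2 a3 w u = 0) :
    u ≠ 0 ∧ u ≠ 1 ∧ u ≠ w ∧ u ≠ a0 ∧ u ≠ a1*w ∧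
    a2*(u-1)+1 ≠ 0 ∧ a2*(u-1)+1 ≠ 1 ∧ a2*(u-1)+1 ≠ w ∧ a2*(u-1)+1 ≠ a0 ∧
    a2*(u-1)+1 ≠ a1*w ∧ a2*(u-1)+1 ≠ u := by
  obtain ⟨hw0, hw1, hwx, hy0, hy1, hyx, hyw⟩ := wprops h00 h01 h10 h11 h40 h41 hQw
  have hu0 : u ≠ 0 := by
    intro h; subst h
    simp only [Qu] at hQu
    exact mul_ne_zero (mul_ne_zero h30 hw0) (sub_ne_zero.mpr (Ne.symm h21))
      (show a3 * w * (1 - a2) = 0 by linear_combination hQu)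
  have hu1 : u ≠ 1 := by
    intro h; subst h
    simp only [Qu] at hQu
    exact mul_ne_zero (sub_ne_zero.mpr (Ne.symm h31)) (sub_ne_zero.mpr (Ne.symm hw1))
      (show (1 - a3) * (1 - w) = 0 by linear_combination hQu)
  have huw : u ≠ w := by
    intro h
    rw [h] at hQu
    simp only [Qu] at hQu
    exact mul_ne_zero (mul_ne_zero hw0 (sub_ne_zero.mpr (Ne.symm h21)))
      (sub_ne_zero.mpr (Ne.symm hw1))
      (show w * (1 - a2) * (1 - w) = 0 by linear_combination hQu)
  have hvu : a2*(u-1)+1 ≠ u := by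
    intro h
    have h2 : (a2 - 1) * (u - 1) = 0 := by linear_combination h
    rcases mul_eq_zero.mp h2 with h3 | h3
    · exact h21 (by linear_combination h3)
    · exact hu1 (by linear_combination h3)
  have hv0 : a2*(u-1)+1 ≠ 0 := by
    intro h
    have h2 : u * w = 0 := by
      simp only [Qu] at hQu
      linear_combination (-1 : ℂ) * hQu + (u - a3*(u-w)) * h
    rcases mul_eq_zero.mp h2 with h3 | h3
    · exact hu0 h3
    · exact hw0 h3
  refine ⟨hu0, hu1, huw, ?_, ?_, hv0, ?_, ?_, ?_, ?_, hvu⟩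
  · -- u ≠ a0
    intro h
    rw [h] at hQu
    simp only [Qu] at hQu
    have hlin : ((a0 - a0 * a3 - a0 * a2 + a0 * a2 * a3 + a0 ^ 2 * a2 - a0 ^ 2 * a2 * a3) : ℂ) + ((a3 - a2 * a3 - a0 + a0 * a2 * a3)) * w = 0 := by linear_combination hQu
    exact hR1 (res_cert hQw hlin)
  · -- u ≠ a1*w
    intro h
    rw [h] at hQu
    simp only [Qu] at hQu
    have h2 : w * (((a3 - a2 * a3 + a1 - a1 * a3 - a1 * a2 + a1 * a2 * a3) : ℂ) + ((-(a1) + a1 * a2 * a3 + a1 ^ 2 * a2 - a1 ^ 2 * a2 * a3)) * w) = 0 := by linear_combination hQu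
    have hlin := (mul_eq_zero.mp h2).resolve_left hw0
    exact hR2 (res_cert hQw hlin)
  · -- v ≠ 1
    intro h
    have h2 : a2 * (u - 1) = 0 := by linear_combination h
    rcases mul_eq_zero.mp h2 with h3 | h3
    · exact h20 h3
    · exact hu1 (by linear_combination h3)
  · -- v ≠ w
    intro h
    have h' : a2*(u-1)+1 - w = 0 := by linear_combination h
    have h2 : a3 * w * (u - w) = 0 := by
      simp only [Qu] at hQu
      linear_combination (-1 : ℂ) * hQu + (u - a3*(u-w)) * h'
    rcases mul_eq_zero.mp h2 with h3 | h3
    · rcases mul_eq_zero.mp h3 with h4 | h4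
      · exact h30 h4
      · exact hw0 h4
    · exact huw (by linear_combination h3)
  · -- v ≠ a0
    intro h
    have h' : a2*(u-1)+1 - a0 = 0 := by linear_combination h
    simp only [Qu] at hQu
    have hlin : ((-(a0 * a2) + a0 * a2 * a3 + a0 * a2 ^ 2 - a0 * a2 ^ 2 * a3 + a0 ^ 2 * a2 - a0 ^ 2 * a2 * a3) : ℂ) + ((a2 - a2 ^ 2 - a0 * a2 + a0 * a2 ^ 2 * a3)) * w = 0 := by
      linear_combination a2 ^ 2 * hQu - ((-(a2 * w) + a2 ^ 2 * u - a2 ^ 2 * a3 * u + a2 ^ 2 * a3 * w + a0 * a2 - a0 * a2 * a3)) * h'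
    exact hR3 (res_cert hQw hlin)
  · -- v ≠ a1*w
    intro h
    have h' : a2*(u-1)+1 - a1*w = 0 := by linear_combination h
    simp only [Qu] at hQu
    have hf4 : ((-(a1 * a2) + a1 * a2 ^ 2 * a3 + a1 ^ 2 * a2 - a1 ^ 2 * a2 * a3) : ℂ) * w ^ 2 + ((a2 - a2 ^ 2 - a1 * a2 + a1 * a2 * a3 + a1 * a2 ^ 2 - a1 * a2 ^ 2 * a3)) * w = 0 := by
      linear_combination a2 ^ 2 * hQu - ((-(a2 * w) + a2 ^ 2 * u - a2 ^ 2 * a3 * u + a2 ^ 2 * a3 * w + a1 * a2 * w - a1 * a2 * a3 * w)) * h'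
    have hlin : ((a0 * a1 * a2 * a4 - a0 * a1 * a2 ^ 2 * a3 * a4 - a0 * a1 ^ 2 * a2 * a4 + a0 * a1 ^ 2 * a2 * a3 * a4) : ℂ) + ((a1 * a2 - a1 * a2 ^ 2 * a4 - a1 * a2 ^ 2 * a3 + a1 * a2 ^ 2 * a3 * a4 + (-2) * a1 ^ 2 * a2 + a1 ^ 2 * a2 * a3 + a1 ^ 2 * a2 ^ 2 * a4 + a1 ^ 2 * a2 ^ 2 * a3 - a1 ^ 2 * a2 ^ 2 * a3 * a4 + a1 ^ 3 * a2 - a1 ^ 3 * a2 * a3 - a0 * a1 * a2 + a0 * a1 * a2 ^ 2 * a3 + (2) * a0 * a1 ^ 2 * a2 - a0 * a1 ^ 2 * a2 * a4 - a0 * a1 ^ 2 * a2 * a3 - a0 * a1 ^ 2 * a2 ^ 2 * a3 + a0 * a1 ^ 2 * a2 ^ 2 * a3 * a4 - a0 * a1 ^ 3 * a2 + a0 * a1 ^ 3 * a2 * a4 + a0 * a1 ^ 3 * a2 * a3 - a0 * a1 ^ 3 * a2 * a3 * a4)) * w = 0 := by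
      have hQ' := hQw
      simp only [Qw] at hQ'
      linear_combination a1 * a4 * hf4 - ((-(a1 * a2) + a1 * a2 ^ 2 * a3 + a1 ^ 2 * a2 - a1 ^ 2 * a2 * a3)) * hQ'
    exact hR4 (res_cert hQw hlin)

lemma disc2_ne (hR5 : R5e a0 a1 a2 a3 a4 ≠ 0) (hQw : Qw a0 a1 a4 w = 0) :
    discrim ((a2 - a2 * a3) : ℂ) ((1) - w - a3 - a2 + a2 * a3 + a2 * a3 * w) (a3 * w - a2 * a3 * w) ≠ 0 := by
  intro h
  have hf5 : (((1) + (-2) * a2 * a3 + a2 ^ 2 * a3 ^ 2) : ℂ) * w ^ 2 + (((-2) + (2) * a3 + (2) * a2 + (-4) * a2 * a3 + (2) * a2 * a3 ^ 2 + (2) * a2 ^ 2 * a3 + (-2) * a2 ^ 2 * a3 ^ 2)) * w + (((1) + (-2) * a3 + a3 ^ 2 + (-2) * a2 + (4) * a2 * a3 + (-2) * a2 * a3 ^ 2 + a2 ^ 2 + (-2) * a2 ^ 2 * a3 + a2 ^ 2 * a3 ^ 2)) = 0 := by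
    simp only [discrim] at h
    linear_combination h
  have hlin : ((a1 * a4 + (-2) * a1 * a3 * a4 + a1 * a3 ^ 2 * a4 + (-2) * a1 * a2 * a4 + (4) * a1 * a2 * a3 * a4 + (-2) * a1 * a2 * a3 ^ 2 * a4 + a1 * a2 ^ 2 * a4 + (-2) * a1 * a2 ^ 2 * a3 * a4 + a1 * a2 ^ 2 * a3 ^ 2 * a4 - a0 * a4 + (2) * a0 * a2 * a3 * a4 - a0 * a2 ^ 2 * a3 ^ 2 * a4) : ℂ) + (((-1) + a4 + (2) * a2 * a3 + (-2) * a2 * a3 * a4 - a2 ^ 2 * a3 ^ 2 + a2 ^ 2 * a3 ^ 2 * a4 + a1 + (-2) * a1 * a4 + (2) * a1 * a3 * a4 + (2) * a1 * a2 * a4 + (-2) * a1 * a2 * a3 + (-4) * a1 * a2 * a3 * a4 + (2) * a1 * a2 * a3 ^ 2 * a4 + (2) * a1 * a2 ^ 2 * a3 * a4 + a1 * a2 ^ 2 * a3 ^ 2 + (-2) * a1 * a2 ^ 2 * a3 ^ 2 * a4 + a0 + (-2) * a0 * a2 * a3 + a0 * a2 ^ 2 * a3 ^ 2 - a0 * a1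 + a0 * a1 * a4 + (2) * a0 * a1 * a2 * a3 + (-2) * a0 * a1 * a2 * a3 * a4 - a0 * a1 * a2 ^ 2 * a3 ^ 2 + a0 * a1 * a2 ^ 2 * a3 ^ 2 * a4)) * w = 0 := by
    have hQ' := hQw
    simp only [Qw] at hQ'
    linear_combination a1 * a4 * hf5 - (((1) + (-2) * a2 * a3 + a2 ^ 2 * a3 ^ 2)) * hQ'
  exact hR5 (res_cert hQw hlin)

end Props

noncomputable def Fp (a0 a1 a2 w u : ℂ) : Fin 8 → OnePoint ℂ :=
  ![∞, ((0:ℂ) : OnePoint ℂ), ((1:ℂ) : OnePoint ℂ), (w : OnePoint ℂ), (a0 : OnePoint ℂ),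
    ((a1*w : ℂ) : OnePoint ℂ), (u : OnePoint ℂ), ((a2*(u-1)+1 : ℂ) : OnePoint ℂ)]

section Fplemmas

variable {a0 a1 a2 a3 a4 w u : ℂ}

lemma Fp0 : Fp a0 a1 a2 w u 0 = ∞ := rfl
lemma Fp1 : Fp a0 a1 a2 w u 1 = ((0:ℂ) : OnePoint ℂ) := rfl
lemma Fp2 : Fp a0 a1 a2 w u 2 = ((1:ℂ) : OnePoint ℂ) := rfl
lemma Fp3 : Fp a0 a1 a2 w u 3 = (w : OnePoint ℂ) := rfl
lemma Fp4 : Fp a0 a1 a2 w u 4 = (a0 : OnePoint ℂ) := rfl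
lemma Fp5 : Fp a0 a1 a2 w u 5 = ((a1*w : ℂ) : OnePoint ℂ) := rfl
lemma Fp6 : Fp a0 a1 a2 w u 6 = (u : OnePoint ℂ) := rfl
lemma Fp7 : Fp a0 a1 a2 w u 7 = ((a2*(u-1)+1 : ℂ) : OnePoint ℂ) := rfl

end Fplemmas

section Part2

lemma roots_ne {A B s : ℂ} (hA : A ≠ 0) (hs : s ≠ 0) :
    (-B + s) / (2 * A) ≠ (-B - s) / (2 * A) := by
  intro h
  apply hs
  have hd : (2 : ℂ) * A ≠ 0 := mul_ne_zero two_ne_zero hA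
  rw [div_eq_div_iff hd hd] at h
  have h2 := mul_right_cancel₀ hd h
  linear_combination h2 / 2

lemma Fp_ne_w {a0 a1 a2 W U W' U' : ℂ} (h : W ≠ W') :
    Fp a0 a1 a2 W U ≠ Fp a0 a1 a2 W' U' := by
  intro hF
  apply h
  have h3 := congrFun hF 3
  rw [Fp3, Fp3] at h3
  exact OnePoint.coe_eq_coe.mp h3

lemma Fp_ne_u {a0 a1 a2 W U W' U' : ℂ} (h : U ≠ U') :
    Fp a0 a1 a2 W U ≠ Fp a0 a1 a2 W' U' := by
  intro hF
  apply h
  have h6 := congrFun hF 6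
  rw [Fp6, Fp6] at h6
  exact OnePoint.coe_eq_coe.mp h6

lemma mem_S {a0 a1 a2 a3 a4 w u : ℂ} (h00 : a0 ≠ 0) (h01 : a0 ≠ 1) (h10 : a1 ≠ 0) (h11 : a1 ≠ 1)
    (h20 : a2 ≠ 0) (h21 : a2 ≠ 1) (h30 : a3 ≠ 0) (h31 : a3 ≠ 1) (h40 : a4 ≠ 0) (h41 : a4 ≠ 1)
    (hR1 : R1e a0 a1 a2 a3 a4 ≠ 0) (hR2 : R2e a0 a1 a2 a3 a4 ≠ 0)
    (hR3 : R3e a0 a1 a2 a3 a4 ≠ 0) (hR4 : R4e a0 a1 a2 a3 a4 ≠ 0)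
    (hQw : Qw a0 a1 a4 w = 0) (hQu : Qu a2 a3 w u = 0) :
    Function.Injective (Fp a0 a1 a2 w u) ∧ Fp a0 a1 a2 w u 0 = ∞ ∧
      Fp a0 a1 a2 w u 1 = ((0 : ℂ) : OnePoint ℂ) ∧ Fp a0 a1 a2 w u 2 = ((1 : ℂ) : OnePoint ℂ) ∧
      CR (Fp a0 a1 a2 w u 0) (Fp a0 a1 a2 w u 1) (Fp a0 a1 a2 w u 2) (Fp a0 a1 a2 w u 4) = a0 ∧
      CR (Fp a0 a1 a2 w u 0) (Fp a0 a1 a2 w u 1) (Fp a0 a1 a2 w u 3) (Fp a0 a1 a2 w u 5) = a1 ∧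
      CR (Fp a0 a1 a2 w u 0) (Fp a0 a1 a2 w u 2) (Fp a0 a1 a2 w u 6) (Fp a0 a1 a2 w u 7) = a2 ∧
      CR (Fp a0 a1 a2 w u 1) (Fp a0 a1 a2 w u 3) (Fp a0 a1 a2 w u 6) (Fp a0 a1 a2 w u 7) = a3 ∧
      CR (Fp a0 a1 a2 w u 2) (Fp a0 a1 a2 w u 3) (Fp a0 a1 a2 w u 4) (Fp a0 a1 a2 w u 5) = a4 := by
  obtain ⟨hw0, hw1, hwx, hy0, hy1, hyx, hyw⟩ := wprops h00 h01 h10 h11 h40 h41 hQw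
  obtain ⟨hu0, hu1, huw, hux, huy, hv0, hv1, hvw, hvx, hvy, hvu⟩ :=
    uprops h00 h01 h10 h11 h20 h21 h30 h31 h40 h41 hR1 hR2 hR3 hR4 hQw hQu
  have hQw' := hQw
  simp only [Qw] at hQw'
  have hQu' := hQu
  simp only [Qu] at hQu'
  refine ⟨?_, rfl, rfl, rfl, ?_, ?_, ?_, ?_, ?_⟩
  · have k01 : ((0:ℂ)) ≠ 1 := by norm_num
    have k0w : (0:ℂ) ≠ w := Ne.symm hw0
    have k0x : (0:ℂ) ≠ a0 := Ne.symm h00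
    have k0y : (0:ℂ) ≠ a1*w := Ne.symm hy0
    have k0u : (0:ℂ) ≠ u := Ne.symm hu0
    have k0v : (0:ℂ) ≠ a2*(u-1)+1 := Ne.symm hv0
    have k1w : (1:ℂ) ≠ w := Ne.symm hw1
    have k1x : (1:ℂ) ≠ a0 := Ne.symm h01
    have k1y : (1:ℂ) ≠ a1*w := Ne.symm hy1
    have k1u : (1:ℂ) ≠ u := Ne.symm hu1
    have k1v : (1:ℂ) ≠ a2*(u-1)+1 := Ne.symm hv1
    have kwy : w ≠ a1*w := Ne.symm hyw
    have kwu : w ≠ u := Ne.symm huw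
    have kwv : w ≠ a2*(u-1)+1 := Ne.symm hvw
    have kxy : a0 ≠ a1*w := Ne.symm hyx
    have kxu : a0 ≠ u := Ne.symm hux
    have kxv : a0 ≠ a2*(u-1)+1 := Ne.symm hvx
    have kyu : a1*w ≠ u := Ne.symm huy
    have kyv : a1*w ≠ a2*(u-1)+1 := Ne.symm hvy
    have kuv : u ≠ a2*(u-1)+1 := Ne.symm hvu
    have k5 : u - 1 ≠ 0 := sub_ne_zero.mpr hu1
    have k6 : w - 1 ≠ 0 := sub_ne_zero.mpr hw1
    have k7 : a2 * (u - 1) ≠ 0 := mul_ne_zero h20 k5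
    rw [← List.nodup_ofFn]
    simp [Fp, List.ofFn_succ, OnePoint.coe_eq_coe]
    tauto
  · rw [Fp0, Fp1, Fp2, Fp4, CR_infty]
    norm_num
  · rw [Fp0, Fp1, Fp3, Fp5, CR_infty]
    rw [sub_zero, sub_zero, div_eq_iff hw0]
  · rw [Fp0, Fp2, Fp6, Fp7, CR_infty]
    rw [div_eq_iff (sub_ne_zero.mpr hu1)]
    ring
  · rw [Fp1, Fp3, Fp6, Fp7, CR_coe]
    rw [div_eq_iff (mul_ne_zero (sub_ne_zero.mpr huw)
      (show (a2*(u-1)+1 : ℂ) - 0 ≠ 0 by simpa using hv0))]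
    linear_combination hQu'
  · rw [Fp2, Fp3, Fp4, Fp5, CR_coe]
    rw [div_eq_iff (mul_ne_zero (sub_ne_zero.mpr (Ne.symm hwx)) (sub_ne_zero.mpr hy1))]
    linear_combination hQw'

lemma S_mem {a0 a1 a2 a3 a4 : ℂ} {p : Fin 8 → OnePoint ℂ}
    (hinj : Function.Injective p) (h0 : p 0 = ∞) (h1 : p 1 = ((0:ℂ) : OnePoint ℂ))
    (h2 : p 2 = ((1:ℂ) : OnePoint ℂ))
    (e1 : CR (p 0) (p 1) (p 2) (p 4) = a0) (e2 : CR (p 0) (p 1) (p 3) (p 5) = a1)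
    (e3 : CR (p 0) (p 2) (p 6) (p 7) = a2) (e4 : CR (p 1) (p 3) (p 6) (p 7) = a3)
    (e5 : CR (p 2) (p 3) (p 4) (p 5) = a4) :
    ∃ w u : ℂ, Qw a0 a1 a4 w = 0 ∧ Qu a2 a3 w u = 0 ∧ p = Fp a0 a1 a2 w u := by
  have key : ∀ {i j : Fin 8}, p i = p j → i = j := fun h => hinj h
  have fin : ∀ i : Fin 8, i ≠ 0 → ∃ z : ℂ, p i = (z : OnePoint ℂ) := by
    intro i hi
    cases hpi : p i with
    | infty => exact absurd (key (hpi.trans h0.symm)) hi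
    | coe z => exact ⟨z, rfl⟩
  obtain ⟨w, h3⟩ := fin 3 (by decide)
  obtain ⟨x, h4⟩ := fin 4 (by decide)
  obtain ⟨y, h5⟩ := fin 5 (by decide)
  obtain ⟨u, h6⟩ := fin 6 (by decide)
  obtain ⟨v, h7⟩ := fin 7 (by decide)
  have hw0 : w ≠ 0 := fun h => absurd (key (show p 3 = p 1 by rw [h3, h1, h])) (by decide)
  have hu1 : u ≠ 1 := fun h => absurd (key (show p 6 = p 2 by rw [h6, h2, h])) (by decide)
  have huw : u ≠ w := fun h => absurd (key (show p 6 = p 3 by rw [h6, h3, h])) (by decide)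
  have hv0 : v ≠ 0 := fun h => absurd (key (show p 7 = p 1 by rw [h7, h1, h])) (by decide)
  have hxw : x ≠ w := fun h => absurd (key (show p 4 = p 3 by rw [h4, h3, h])) (by decide)
  have hy1 : y ≠ 1 := fun h => absurd (key (show p 5 = p 2 by rw [h5, h2, h])) (by decide)
  rw [h0, h1, h2, h4, CR_infty] at e1
  norm_num at e1
  rw [e1] at h4 hxw
  rw [h0, h1, h3, h5, CR_infty] at e2
  rw [sub_zero, sub_zero, div_eq_iff hw0] at e2
  subst e2
  rw [h0, h2, h6, h7, CR_infty] at e3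
  rw [div_eq_iff (sub_ne_zero.mpr hu1)] at e3
  have e3' : v = a2*(u-1)+1 := by linear_combination e3
  subst e3'
  rw [h1, h3, h6, h7, CR_coe] at e4
  rw [div_eq_iff (mul_ne_zero (sub_ne_zero.mpr huw)
    (show (a2*(u-1)+1 : ℂ) - 0 ≠ 0 by simpa using hv0))] at e4
  have hQu : Qu a2 a3 w u = 0 := by
    simp only [Qu]
    linear_combination e4
  rw [h2, h3, h4, h5, CR_coe] at e5
  rw [div_eq_iff (mul_ne_zero (sub_ne_zero.mpr hxw) (sub_ne_zero.mpr hy1))] at e5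
  have hQw : Qw a0 a1 a4 w = 0 := by
    simp only [Qw]
    linear_combination e5
  refine ⟨w, u, hQw, hQu, ?_⟩
  funext i
  fin_cases i
  · exact h0
  · exact h1
  · exact h2
  · exact h3
  · exact h4
  · exact h5
  · exact h6
  · exact h7

end Part2

theorem crossRatioDegree_eq_four_T2 :
    ∃ q : MvPolynomial (Fin 5) ℂ, q ≠ 0 ∧
      ∀ a : Fin 5 → ℂ, (∀ i, a i ≠ 0 ∧ a i ≠ 1) → MvPolynomial.eval a q ≠ 0 →
        let S : Set (Fin 8 → OnePoint ℂ) :=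
          {p | Function.Injective p ∧ p 0 = ∞ ∧ p 1 = ((0 : ℂ) : OnePoint ℂ) ∧
            p 2 = ((1 : ℂ) : OnePoint ℂ) ∧
            CR (p 0) (p 1) (p 2) (p 4) = a 0 ∧
            CR (p 0) (p 1) (p 3) (p 5) = a 1 ∧
            CR (p 0) (p 2) (p 6) (p 7) = a 2 ∧
            CR (p 1) (p 3) (p 6) (p 7) = a 3 ∧
            CR (p 2) (p 3) (p 4) (p 5) = a 4}
        S.Finite ∧ S.ncard = 4 := by
  refine ⟨qpoly, ?_, ?_⟩
  · have h2 : MvPolynomial.eval (fun _ => (2:ℂ)) qpoly ≠ 0 := by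
      rw [heval]
      simp only [R0e, R1e, R2e, R3e, R4e, R5e, Rg]
      norm_num
    intro h
    rw [h, map_zero] at h2
    exact h2 rfl
  · intro a ha hq
    obtain ⟨h00, h01⟩ := ha 0
    obtain ⟨h10, h11⟩ := ha 1
    obtain ⟨h20, h21⟩ := ha 2
    obtain ⟨h30, h31⟩ := ha 3
    obtain ⟨h40, h41⟩ := ha 4
    rw [heval] at hq
    obtain ⟨hq5, hR5⟩ := mul_ne_zero_iff.mp hq
    obtain ⟨hq4, hR4⟩ := mul_ne_zero_iff.mp hq5
    obtain ⟨hq3, hR3⟩ := mul_ne_zero_iff.mp hq4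
    obtain ⟨hq2, hR2⟩ := mul_ne_zero_iff.mp hq3
    obtain ⟨hR0, hR1⟩ := mul_ne_zero_iff.mp hq2
    have hA1 : a 1 * a 4 ≠ 0 := mul_ne_zero h10 h40
    have hA2 : (a 2 - a 2 * a 3 : ℂ) ≠ 0 := by
      intro h
      have h2 : a 2 * (1 - a 3) = 0 := by linear_combination h
      rcases mul_eq_zero.mp h2 with h3 | h3
      · exact h20 h3
      · exact h31 (by linear_combination -h3)
    obtain ⟨s, hs⟩ := IsAlgClosed.exists_pow_nat_eq
      (discrim (a 1 * a 4) ((1) - a 4 - a 1 - a 0 + a 0 * a 1 - a 0 * a 1 * a 4) (a 0 * a 4)) (by norm_num : (0:ℕ) < 2)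
    have hs' : discrim (a 1 * a 4) ((1) - a 4 - a 1 - a 0 + a 0 * a 1 - a 0 * a 1 * a 4) (a 0 * a 4) = s * s := by rw [← hs]; ring
    have hsne : s ≠ 0 := by
      intro h
      apply hR0
      have h2 := hs'
      rw [h, mul_zero] at h2
      simp only [discrim] at h2
      simp only [R0e]
      linear_combination h2
    obtain ⟨w1, hw1⟩ : ∃ W : ℂ, W = (-((1) - a 4 - a 1 - a 0 + a 0 * a 1 - a 0 * a 1 * a 4) + s) / (2 * (a 1 * a 4)) := ⟨_, rfl⟩
    obtain ⟨w2, hw2⟩ : ∃ W : ℂ, W = (-((1) - a 4 - a 1 - a 0 + a 0 * a 1 - a 0 * a 1 * a 4) - s) / (2 * (a 1 * a 4)) := ⟨_, rfl⟩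
    have hwiff : ∀ W : ℂ, Qw (a 0) (a 1) (a 4) W = 0 ↔ W = w1 ∨ W = w2 := by
      intro W
      rw [hw1, hw2]
      exact quadratic_eq_zero_iff hA1 hs' W
    have hw12 : w1 ≠ w2 := by
      rw [hw1, hw2]
      exact roots_ne hA1 hsne
    have hQw1 : Qw (a 0) (a 1) (a 4) w1 = 0 := (hwiff w1).mpr (Or.inl rfl)
    have hQw2 : Qw (a 0) (a 1) (a 4) w2 = 0 := (hwiff w2).mpr (Or.inr rfl)
    -- roots in u over w1
    have hd1 := disc2_ne hR5 hQw1
    obtain ⟨t1, ht1⟩ := IsAlgClosed.exists_pow_nat_eq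
      (discrim ((a 2 - a 2 * a 3) : ℂ) ((1) - w1 - a 3 - a 2 + a 2 * a 3 + a 2 * a 3 * w1) (a 3 * w1 - a 2 * a 3 * w1)) (by norm_num : (0:ℕ) < 2)
    have ht1' : discrim ((a 2 - a 2 * a 3) : ℂ) ((1) - w1 - a 3 - a 2 + a 2 * a 3 + a 2 * a 3 * w1) (a 3 * w1 - a 2 * a 3 * w1) = t1 * t1 := by rw [← ht1]; ring
    have ht1ne : t1 ≠ 0 := by
      intro h
      apply hd1
      rw [ht1', h, mul_zero]
    obtain ⟨u11, hu11⟩ : ∃ U : ℂ, U = (-((1) - w1 - a 3 - a 2 + a 2 * a 3 + a 2 * a 3 * w1) + t1) / (2 * (a 2 - a 2 * a 3)) := ⟨_, rfl⟩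
    obtain ⟨u12, hu12⟩ : ∃ U : ℂ, U = (-((1) - w1 - a 3 - a 2 + a 2 * a 3 + a 2 * a 3 * w1) - t1) / (2 * (a 2 - a 2 * a 3)) := ⟨_, rfl⟩
    have hu1iff : ∀ U : ℂ, Qu (a 2) (a 3) w1 U = 0 ↔ U = u11 ∨ U = u12 := by
      intro U
      rw [hu11, hu12]
      exact quadratic_eq_zero_iff hA2 ht1' U
    have hu1ne : u11 ≠ u12 := by
      rw [hu11, hu12]
      exact roots_ne hA2 ht1ne
    -- roots in u over w2
    have hd2 := disc2_ne hR5 hQw2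
    obtain ⟨t2, ht2⟩ := IsAlgClosed.exists_pow_nat_eq
      (discrim ((a 2 - a 2 * a 3) : ℂ) ((1) - w2 - a 3 - a 2 + a 2 * a 3 + a 2 * a 3 * w2) (a 3 * w2 - a 2 * a 3 * w2)) (by norm_num : (0:ℕ) < 2)
    have ht2' : discrim ((a 2 - a 2 * a 3) : ℂ) ((1) - w2 - a 3 - a 2 + a 2 * a 3 + a 2 * a 3 * w2) (a 3 * w2 - a 2 * a 3 * w2) = t2 * t2 := by rw [← ht2]; ring
    have ht2ne : t2 ≠ 0 := by
      intro h
      apply hd2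
      rw [ht2', h, mul_zero]
    obtain ⟨u21, hu21⟩ : ∃ U : ℂ, U = (-((1) - w2 - a 3 - a 2 + a 2 * a 3 + a 2 * a 3 * w2) + t2) / (2 * (a 2 - a 2 * a 3)) := ⟨_, rfl⟩
    obtain ⟨u22, hu22⟩ : ∃ U : ℂ, U = (-((1) - w2 - a 3 - a 2 + a 2 * a 3 + a 2 * a 3 * w2) - t2) / (2 * (a 2 - a 2 * a 3)) := ⟨_, rfl⟩
    have hu2iff : ∀ U : ℂ, Qu (a 2) (a 3) w2 U = 0 ↔ U = u21 ∨ U = u22 := by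
      intro U
      rw [hu21, hu22]
      exact quadratic_eq_zero_iff hA2 ht2' U
    have hu2ne : u21 ≠ u22 := by
      rw [hu21, hu22]
      exact roots_ne hA2 ht2ne
    have hQu11 : Qu (a 2) (a 3) w1 u11 = 0 := (hu1iff u11).mpr (Or.inl rfl)
    have hQu12 : Qu (a 2) (a 3) w1 u12 = 0 := (hu1iff u12).mpr (Or.inr rfl)
    have hQu21 : Qu (a 2) (a 3) w2 u21 = 0 := (hu2iff u21).mpr (Or.inl rfl)
    have hQu22 : Qu (a 2) (a 3) w2 u22 = 0 := (hu2iff u22).mpr (Or.inr rfl)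
    show ({p | Function.Injective p ∧ p 0 = ∞ ∧ p 1 = ((0 : ℂ) : OnePoint ℂ) ∧
            p 2 = ((1 : ℂ) : OnePoint ℂ) ∧
            CR (p 0) (p 1) (p 2) (p 4) = a 0 ∧
            CR (p 0) (p 1) (p 3) (p 5) = a 1 ∧
            CR (p 0) (p 2) (p 6) (p 7) = a 2 ∧
            CR (p 1) (p 3) (p 6) (p 7) = a 3 ∧
            CR (p 2) (p 3) (p 4) (p 5) = a 4} : Set (Fin 8 → OnePoint ℂ)).Finite ∧
      ({p | Function.Injective p ∧ p 0 = ∞ ∧ p 1 = ((0 : ℂ) : OnePoint ℂ) ∧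
            p 2 = ((1 : ℂ) : OnePoint ℂ) ∧
            CR (p 0) (p 1) (p 2) (p 4) = a 0 ∧
            CR (p 0) (p 1) (p 3) (p 5) = a 1 ∧
            CR (p 0) (p 2) (p 6) (p 7) = a 2 ∧
            CR (p 1) (p 3) (p 6) (p 7) = a 3 ∧
            CR (p 2) (p 3) (p 4) (p 5) = a 4} : Set (Fin 8 → OnePoint ℂ)).ncard = 4
    have hchar : ({p | Function.Injective p ∧ p 0 = ∞ ∧ p 1 = ((0 : ℂ) : OnePoint ℂ) ∧
            p 2 = ((1 : ℂ) : OnePoint ℂ) ∧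
            CR (p 0) (p 1) (p 2) (p 4) = a 0 ∧
            CR (p 0) (p 1) (p 3) (p 5) = a 1 ∧
            CR (p 0) (p 2) (p 6) (p 7) = a 2 ∧
            CR (p 1) (p 3) (p 6) (p 7) = a 3 ∧
            CR (p 2) (p 3) (p 4) (p 5) = a 4} : Set (Fin 8 → OnePoint ℂ)) =
        {Fp (a 0) (a 1) (a 2) w1 u11, Fp (a 0) (a 1) (a 2) w1 u12,
         Fp (a 0) (a 1) (a 2) w2 u21, Fp (a 0) (a 1) (a 2) w2 u22} := by
      ext p
      constructor
      · intro hp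
        obtain ⟨hinj, h0, h1, h2, e1, e2, e3, e4, e5⟩ := hp
        obtain ⟨w, u, hQw, hQu, rfl⟩ := S_mem hinj h0 h1 h2 e1 e2 e3 e4 e5
        rcases (hwiff w).mp hQw with rfl | rfl
        · rcases (hu1iff u).mp hQu with rfl | rfl
          · exact Set.mem_insert _ _
          · exact Set.mem_insert_of_mem _ (Set.mem_insert _ _)
        · rcases (hu2iff u).mp hQu with rfl | rfl
          · exact Set.mem_insert_of_mem _ (Set.mem_insert_of_mem _ (Set.mem_insert _ _))
          · exact Set.mem_insert_of_mem _ (Set.mem_insert_of_mem _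
              (Set.mem_insert_of_mem _ rfl))
      · intro hp
        simp only [Set.mem_insert_iff, Set.mem_singleton_iff] at hp
        rcases hp with rfl | rfl | rfl | rfl
        · exact mem_S h00 h01 h10 h11 h20 h21 h30 h31 h40 h41 hR1 hR2 hR3 hR4 hQw1 hQu11
        · exact mem_S h00 h01 h10 h11 h20 h21 h30 h31 h40 h41 hR1 hR2 hR3 hR4 hQw1 hQu12
        · exact mem_S h00 h01 h10 h11 h20 h21 h30 h31 h40 h41 hR1 hR2 hR3 hR4 hQw2 hQu21
        · exact mem_S h00 h01 h10 h11 h20 h21 h30 h31 h40 h41 hR1 hR2 hR3 hR4 hQw2 hQu22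
    have ne12 : Fp (a 0) (a 1) (a 2) w1 u11 ≠ Fp (a 0) (a 1) (a 2) w1 u12 := Fp_ne_u hu1ne
    have ne13 : Fp (a 0) (a 1) (a 2) w1 u11 ≠ Fp (a 0) (a 1) (a 2) w2 u21 := Fp_ne_w hw12
    have ne14 : Fp (a 0) (a 1) (a 2) w1 u11 ≠ Fp (a 0) (a 1) (a 2) w2 u22 := Fp_ne_w hw12
    have ne23 : Fp (a 0) (a 1) (a 2) w1 u12 ≠ Fp (a 0) (a 1) (a 2) w2 u21 := Fp_ne_w hw12
    have ne24 : Fp (a 0) (a 1) (a 2) w1 u12 ≠ Fp (a 0) (a 1) (a 2) w2 u22 := Fp_ne_w hw12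
    have ne34 : Fp (a 0) (a 1) (a 2) w2 u21 ≠ Fp (a 0) (a 1) (a 2) w2 u22 := Fp_ne_u hu2ne
    have f4 : ({Fp (a 0) (a 1) (a 2) w2 u22} : Set (Fin 8 → OnePoint ℂ)).Finite :=
      Set.finite_singleton _
    have f3 := f4.insert (Fp (a 0) (a 1) (a 2) w2 u21)
    have f2 := f3.insert (Fp (a 0) (a 1) (a 2) w1 u12)
    have f1 := f2.insert (Fp (a 0) (a 1) (a 2) w1 u11)
    constructor
    · rw [hchar]
      exact f1
    · rw [hchar]
      have nm1 : Fp (a 0) (a 1) (a 2) w1 u11 ∉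
          ({Fp (a 0) (a 1) (a 2) w1 u12, Fp (a 0) (a 1) (a 2) w2 u21,
            Fp (a 0) (a 1) (a 2) w2 u22} : Set (Fin 8 → OnePoint ℂ)) := by
        simp only [Set.mem_insert_iff, Set.mem_singleton_iff]
        push_neg
        exact ⟨ne12, ne13, ne14⟩
      have nm2 : Fp (a 0) (a 1) (a 2) w1 u12 ∉
          ({Fp (a 0) (a 1) (a 2) w2 u21, Fp (a 0) (a 1) (a 2) w2 u22} :
            Set (Fin 8 → OnePoint ℂ)) := by
        simp only [Set.mem_insert_iff, Set.mem_singleton_iff]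
        push_neg
        exact ⟨ne23, ne24⟩
      have nm3 : Fp (a 0) (a 1) (a 2) w2 u21 ∉
          ({Fp (a 0) (a 1) (a 2) w2 u22} : Set (Fin 8 → OnePoint ℂ)) := by
        simp only [Set.mem_singleton_iff]
        exact ne34
      rw [Set.ncard_insert_of_notMem nm1 f2, Set.ncard_insert_of_notMem nm2 f3,
        Set.ncard_insert_of_notMem nm3 f4, Set.ncard_singleton]
end

section
/- The cross-ratio datum T = ((1,2,3,4),(1,2,5,6),(1,2,7,8),(3,4,5,6),(3,4,7,8)) on 8 points has cross-ratio degree exactly 4: there exists a nonzero polynomial q ∈ ℂ[x₁,…,x₅] such that for every (a₁,…,a₅) ∈ (ℂ∖{0,1})⁵ with q(a₁,…,a₅) ≠ 0, the set of tuples (p₁,…,p₈) of pairwise distinct points of ℙ¹(ℂ) with p₁ = ∞, p₂ = 0, p₃ = 1 satisfying CR(p₁,p₂,p₃,p₄)=a₁, CR(p₁,p₂,p₅,p₆)=a₂, CR(p₁,p₂,p₇,p₈)=a₃, CR(p₃,p₄,p₅,p₆)=a₄, CR(p₃,p₄,p₇,p₈)=a₅ has exactly 4 elements. -/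
open OnePoint MvPolynomial

lemma CR_inf (b c d : ℂ) : CR ∞ b c d = (d - b) / (c - b) := rfl

lemma CR_fin (z₁ z₂ z₃ z₄ : ℂ) :
    CR z₁ z₂ z₃ z₄ = ((z₃ - z₁) * (z₄ - z₂)) / ((z₃ - z₂) * (z₄ - z₁)) := rfl

/-- resultant of two quadratics -/
def rs {R : Type*} [CommRing R] (x y z u v w : R) : R :=
  (x*w - z*u)^2 - (x*v - y*u)*(y*w - z*v)

lemma res_ne {α β γ α' β' γ' r : ℂ} (h : rs α β γ α' β' γ' ≠ 0)
    (hf : α*r^2 + β*r + γ = 0) : α'*r^2 + β'*r + γ' ≠ 0 := by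
  intro hg
  apply h
  simp only [rs]
  linear_combination (((α*β'-β*α')*r - (α*γ'-γ*α'))*α' + (α*β'-β*α')*β') * hf +
    (((α*γ'-γ*α') - (α*β'-β*α')*r)*α - (α*β'-β*α')*β) * hg

lemma quad_eq_zero_iff {α β γ δ : ℂ} (hα : α ≠ 0) (hδ : δ^2 = β^2 - 4*α*γ) (z : ℂ) :
    α*z^2 + β*z + γ = 0 ↔ z = (-β + δ)/(2*α) ∨ z = (-β - δ)/(2*α) := by
  have h2 : (2:ℂ)*α ≠ 0 := mul_ne_zero two_ne_zero hα
  have h4 : (4:ℂ)*α ≠ 0 := by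
    intro hc; exact hα (by linear_combination hc/4)
  rw [eq_div_iff h2, eq_div_iff h2]
  constructor
  · intro h
    have hkey : (2*α*z - (-β + δ)) * (2*α*z - (-β - δ)) = 0 := by
      linear_combination 4*α*h - hδ
    rcases mul_eq_zero.1 hkey with h' | h'
    · left; linear_combination h'
    · right; linear_combination h'
  · rintro (h | h)
    · apply mul_left_cancel₀ h4
      linear_combination (2*α*z + β + δ)*h + hδ
    · apply mul_left_cancel₀ h4
      linear_combination (2*α*z + β - δ)*h + hδ

lemma root_facts {A B D r : ℂ} (hA0 : A ≠ 0) (hA1 : A ≠ 1) (hB0 : B ≠ 0) (hB1 : B ≠ 1)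
    (hD0 : D ≠ 0) (hD1 : D ≠ 1)
    (hr : B*(1-D)*r^2 + (D + A*B*D - A - B)*r + A*(1-D) = 0) :
    r ≠ 0 ∧ r ≠ 1 ∧ r ≠ A ∧ B*r ≠ 1 ∧ B*r ≠ A ∧ B*r ≠ r := by
  have hA1' : (1:ℂ) - A ≠ 0 := sub_ne_zero_of_ne (Ne.symm hA1)
  have hB1' : (1:ℂ) - B ≠ 0 := sub_ne_zero_of_ne (Ne.symm hB1)
  have hD1' : (1:ℂ) - D ≠ 0 := sub_ne_zero_of_ne (Ne.symm hD1)
  refine ⟨?_, ?_, ?_, ?_, ?_, ?_⟩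
  · intro h
    exact mul_ne_zero hA0 hD1' (by linear_combination hr - (B*(1-D)*r + (D + A*B*D - A - B))*h)
  · intro h
    exact mul_ne_zero hD0 (mul_ne_zero hA1' hB1')
      (by linear_combination hr - (B*(1-D)*(r+1) + (D + A*B*D - A - B))*h)
  · intro h
    exact mul_ne_zero hA0 (mul_ne_zero hA1' hB1')
      (by linear_combination hr - (B*(1-D)*(r+A) + (D + A*B*D - A - B))*h)
  · intro h
    exact mul_ne_zero hB0 (mul_ne_zero hA1' hB1')
      (by linear_combination B^2*hr - (B*(1-D)*(B*r+1) + (D + A*B*D - A - B)*B)*h)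
  · intro h
    exact mul_ne_zero hA0 (mul_ne_zero hB0 (mul_ne_zero hD0 (mul_ne_zero hA1' hB1')))
      (by linear_combination B^2*hr - (B*(1-D)*(B*r+A) + (D + A*B*D - A - B)*B)*h)
  · intro h
    have hr0 : r ≠ 0 := by
      intro h0
      exact mul_ne_zero hA0 hD1'
        (by linear_combination hr - (B*(1-D)*r + (D + A*B*D - A - B))*h0)
    refine hr0 ?_
    have hkey : (B - 1) * r = 0 := by linear_combination h
    rcases mul_eq_zero.1 hkey with h' | h'
    · exact absurd (by linear_combination h' : B = 1) hB1
    · exact h'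

def bigQ {R : Type*} [CommRing R] (A B C D E : R) : R :=
  ((D + A*B*D - A - B)^2 - 4*(B*(1-D))*(A*(1-D))) *
  ((E + A*C*E - A - C)^2 - 4*(C*(1-E))*(A*(1-E))) *
  rs (B*(1-D)) (D + A*B*D - A - B) (A*(1-D)) (C*(1-E)) (E + A*C*E - A - C) (A*(1-E)) *
  rs (B*(1-D)) (D + A*B*D - A - B) (A*(1-D)) (C*(1-E)) (C*(E + A*C*E - A - C)) (C^2*(A*(1-E))) *
  rs (B*(1-D)) (B*(D + A*B*D - A - B)) (B^2*(A*(1-D))) (C*(1-E)) (E + A*C*E - A - C) (A*(1-E)) *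
  rs (B*(1-D)) (B*(D + A*B*D - A - B)) (B^2*(A*(1-D))) (C*(1-E)) (C*(E + A*C*E - A - C)) (C^2*(A*(1-E)))

lemma eval_bigQ (a : Fin 5 → ℂ) :
    eval a (bigQ (X 0) (X 1) (X 2) (X 3) (X 4) : MvPolynomial (Fin 5) ℂ) =
      bigQ (a 0) (a 1) (a 2) (a 3) (a 4) := by
  simp only [bigQ, rs, map_mul, map_sub, map_add, map_pow, map_one, map_ofNat, eval_X]

lemma bigQ_ne_zero : (bigQ (X 0) (X 1) (X 2) (X 3) (X 4) : MvPolynomial (Fin 5) ℂ) ≠ 0 := by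
  intro h0
  have h1 : bigQ (2:ℂ) 3 5 7 11 ≠ 0 := by norm_num [bigQ, rs]
  apply h1
  have h2 := congrArg (eval (![2,3,5,7,11] : Fin 5 → ℂ)) h0
  rw [eval_bigQ, map_zero] at h2
  simpa using h2

noncomputable def Pt (A B C r s : ℂ) : Fin 8 → OnePoint ℂ
  | 0 => ∞
  | 1 => ((0:ℂ) : OnePoint ℂ)
  | 2 => ((1:ℂ) : OnePoint ℂ)
  | 3 => (A : OnePoint ℂ)
  | 4 => (r : OnePoint ℂ)
  | 5 => ((B*r : ℂ) : OnePoint ℂ)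
  | 6 => (s : OnePoint ℂ)
  | 7 => ((C*s : ℂ) : OnePoint ℂ)

lemma Pt_injective {A B C r s : ℂ} (hA0 : A ≠ 0) (hA1 : A ≠ 1)
    (hr0 : r ≠ 0) (hr1 : r ≠ 1) (hrA : r ≠ A)
    (hBr0 : B*r ≠ 0) (hBr1 : B*r ≠ 1) (hBrA : B*r ≠ A) (hBrr : B*r ≠ r)
    (hs0 : s ≠ 0) (hs1 : s ≠ 1) (hsA : s ≠ A) (hsr : s ≠ r) (hsBr : s ≠ B*r)
    (hCs0 : C*s ≠ 0) (hCs1 : C*s ≠ 1) (hCsA : C*s ≠ A) (hCsr : C*s ≠ r)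
    (hCsBr : C*s ≠ B*r) (hCss : C*s ≠ s) :
    Function.Injective (Pt A B C r s) := by
  intro i j hij
  fin_cases i <;> fin_cases j
  · rfl
  · exact absurd hij (OnePoint.infty_ne_coe _)
  · exact absurd hij (OnePoint.infty_ne_coe _)
  · exact absurd hij (OnePoint.infty_ne_coe _)
  · exact absurd hij (OnePoint.infty_ne_coe _)
  · exact absurd hij (OnePoint.infty_ne_coe _)
  · exact absurd hij (OnePoint.infty_ne_coe _)
  · exact absurd hij (OnePoint.infty_ne_coe _)
  · exact absurd hij (OnePoint.coe_ne_infty _)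
  · rfl
  · exact absurd (OnePoint.coe_eq_coe.1 hij) zero_ne_one
  · exact absurd (OnePoint.coe_eq_coe.1 hij) (Ne.symm hA0)
  · exact absurd (OnePoint.coe_eq_coe.1 hij) (Ne.symm hr0)
  · exact absurd (OnePoint.coe_eq_coe.1 hij) (Ne.symm hBr0)
  · exact absurd (OnePoint.coe_eq_coe.1 hij) (Ne.symm hs0)
  · exact absurd (OnePoint.coe_eq_coe.1 hij) (Ne.symm hCs0)
  · exact absurd hij (OnePoint.coe_ne_infty _)
  · exact absurd (OnePoint.coe_eq_coe.1 hij) (Ne.symm zero_ne_one)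
  · rfl
  · exact absurd (OnePoint.coe_eq_coe.1 hij) (Ne.symm hA1)
  · exact absurd (OnePoint.coe_eq_coe.1 hij) (Ne.symm hr1)
  · exact absurd (OnePoint.coe_eq_coe.1 hij) (Ne.symm hBr1)
  · exact absurd (OnePoint.coe_eq_coe.1 hij) (Ne.symm hs1)
  · exact absurd (OnePoint.coe_eq_coe.1 hij) (Ne.symm hCs1)
  · exact absurd hij (OnePoint.coe_ne_infty _)
  · exact absurd (OnePoint.coe_eq_coe.1 hij) hA0
  · exact absurd (OnePoint.coe_eq_coe.1 hij) hA1
  · rfl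
  · exact absurd (OnePoint.coe_eq_coe.1 hij) (Ne.symm hrA)
  · exact absurd (OnePoint.coe_eq_coe.1 hij) (Ne.symm hBrA)
  · exact absurd (OnePoint.coe_eq_coe.1 hij) (Ne.symm hsA)
  · exact absurd (OnePoint.coe_eq_coe.1 hij) (Ne.symm hCsA)
  · exact absurd hij (OnePoint.coe_ne_infty _)
  · exact absurd (OnePoint.coe_eq_coe.1 hij) hr0
  · exact absurd (OnePoint.coe_eq_coe.1 hij) hr1
  · exact absurd (OnePoint.coe_eq_coe.1 hij) hrA
  · rfl
  · exact absurd (OnePoint.coe_eq_coe.1 hij) (Ne.symm hBrr)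
  · exact absurd (OnePoint.coe_eq_coe.1 hij) (Ne.symm hsr)
  · exact absurd (OnePoint.coe_eq_coe.1 hij) (Ne.symm hCsr)
  · exact absurd hij (OnePoint.coe_ne_infty _)
  · exact absurd (OnePoint.coe_eq_coe.1 hij) hBr0
  · exact absurd (OnePoint.coe_eq_coe.1 hij) hBr1
  · exact absurd (OnePoint.coe_eq_coe.1 hij) hBrA
  · exact absurd (OnePoint.coe_eq_coe.1 hij) hBrr
  · rfl
  · exact absurd (OnePoint.coe_eq_coe.1 hij) (Ne.symm hsBr)
  · exact absurd (OnePoint.coe_eq_coe.1 hij) (Ne.symm hCsBr)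
  · exact absurd hij (OnePoint.coe_ne_infty _)
  · exact absurd (OnePoint.coe_eq_coe.1 hij) hs0
  · exact absurd (OnePoint.coe_eq_coe.1 hij) hs1
  · exact absurd (OnePoint.coe_eq_coe.1 hij) hsA
  · exact absurd (OnePoint.coe_eq_coe.1 hij) hsr
  · exact absurd (OnePoint.coe_eq_coe.1 hij) hsBr
  · rfl
  · exact absurd (OnePoint.coe_eq_coe.1 hij) (Ne.symm hCss)
  · exact absurd hij (OnePoint.coe_ne_infty _)
  · exact absurd (OnePoint.coe_eq_coe.1 hij) hCs0
  · exact absurd (OnePoint.coe_eq_coe.1 hij) hCs1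
  · exact absurd (OnePoint.coe_eq_coe.1 hij) hCsA
  · exact absurd (OnePoint.coe_eq_coe.1 hij) hCsr
  · exact absurd (OnePoint.coe_eq_coe.1 hij) hCsBr
  · exact absurd (OnePoint.coe_eq_coe.1 hij) hCss
  · rfl

lemma Pt_ne {A B C : ℂ} {x y x' y' : ℂ} (h : x ≠ x' ∨ y ≠ y') :
    Pt A B C x y ≠ Pt A B C x' y' := by
  intro hEq
  have h4 : (x : OnePoint ℂ) = (x' : OnePoint ℂ) := congrFun hEq 4
  have h6 : (y : OnePoint ℂ) = (y' : OnePoint ℂ) := congrFun hEq 6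
  rcases h with h | h
  · exact h (OnePoint.coe_eq_coe.1 h4)
  · exact h (OnePoint.coe_eq_coe.1 h6)

lemma key (a : Fin 5 → ℂ) (ha : ∀ i, a i ≠ 0 ∧ a i ≠ 1)
    (hq : bigQ (a 0) (a 1) (a 2) (a 3) (a 4) ≠ 0) :
    ({p : Fin 8 → OnePoint ℂ | Function.Injective p ∧ p 0 = ∞ ∧ p 1 = ((0 : ℂ) : OnePoint ℂ) ∧
        p 2 = ((1 : ℂ) : OnePoint ℂ) ∧
        CR (p 0) (p 1) (p 2) (p 3) = a 0 ∧
        CR (p 0) (p 1) (p 4) (p 5) = a 1 ∧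
        CR (p 0) (p 1) (p 6) (p 7) = a 2 ∧
        CR (p 2) (p 3) (p 4) (p 5) = a 3 ∧
        CR (p 2) (p 3) (p 6) (p 7) = a 4} : Set (Fin 8 → OnePoint ℂ)).Finite ∧
    ({p : Fin 8 → OnePoint ℂ | Function.Injective p ∧ p 0 = ∞ ∧ p 1 = ((0 : ℂ) : OnePoint ℂ) ∧
        p 2 = ((1 : ℂ) : OnePoint ℂ) ∧
        CR (p 0) (p 1) (p 2) (p 3) = a 0 ∧
        CR (p 0) (p 1) (p 4) (p 5) = a 1 ∧
        CR (p 0) (p 1) (p 6) (p 7) = a 2 ∧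
        CR (p 2) (p 3) (p 4) (p 5) = a 3 ∧
        CR (p 2) (p 3) (p 6) (p 7) = a 4} : Set (Fin 8 → OnePoint ℂ)).ncard = 4 := by
  set S : Set (Fin 8 → OnePoint ℂ) :=
    {p : Fin 8 → OnePoint ℂ | Function.Injective p ∧ p 0 = ∞ ∧ p 1 = ((0 : ℂ) : OnePoint ℂ) ∧
        p 2 = ((1 : ℂ) : OnePoint ℂ) ∧
        CR (p 0) (p 1) (p 2) (p 3) = a 0 ∧
        CR (p 0) (p 1) (p 4) (p 5) = a 1 ∧
        CR (p 0) (p 1) (p 6) (p 7) = a 2 ∧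
        CR (p 2) (p 3) (p 4) (p 5) = a 3 ∧
        CR (p 2) (p 3) (p 6) (p 7) = a 4} with hS
  obtain ⟨hA0, hA1⟩ := ha 0
  obtain ⟨hB0, hB1⟩ := ha 1
  obtain ⟨hC0, hC1⟩ := ha 2
  obtain ⟨hD0, hD1⟩ := ha 3
  obtain ⟨hE0, hE1⟩ := ha 4
  rw [bigQ] at hq
  simp only [mul_ne_zero_iff] at hq
  obtain ⟨⟨⟨⟨⟨hF1, hF2⟩, hF3⟩, hF4⟩, hF5⟩, hF6⟩ := hq
  have hα₁ : a 1 * (1 - a 3) ≠ 0 := mul_ne_zero hB0 (sub_ne_zero_of_ne (Ne.symm hD1))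
  have hα₂ : a 2 * (1 - a 4) ≠ 0 := mul_ne_zero hC0 (sub_ne_zero_of_ne (Ne.symm hE1))
  obtain ⟨δ₁, hδ₁⟩ : ∃ z : ℂ,
      z^2 = (a 3 + a 0*a 1*a 3 - a 0 - a 1)^2 - 4*(a 1*(1-a 3))*(a 0*(1-a 3)) :=
    IsAlgClosed.exists_pow_nat_eq _ (by norm_num)
  obtain ⟨δ₂, hδ₂⟩ : ∃ z : ℂ,
      z^2 = (a 4 + a 0*a 2*a 4 - a 0 - a 2)^2 - 4*(a 2*(1-a 4))*(a 0*(1-a 4)) :=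
    IsAlgClosed.exists_pow_nat_eq _ (by norm_num)
  have hδ₁0 : δ₁ ≠ 0 := fun h => hF1 (by rw [← hδ₁, h]; ring)
  have hδ₂0 : δ₂ ≠ 0 := fun h => hF2 (by rw [← hδ₂, h]; ring)
  have h2α₁ : (2:ℂ)*(a 1*(1-a 3)) ≠ 0 := mul_ne_zero two_ne_zero hα₁
  have h2α₂ : (2:ℂ)*(a 2*(1-a 4)) ≠ 0 := mul_ne_zero two_ne_zero hα₂
  obtain ⟨r₁, r₂, hrne, hroot1⟩ : ∃ u v : ℂ, u ≠ v ∧ ∀ z : ℂ,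
      (a 1*(1-a 3)*z^2 + (a 3 + a 0*a 1*a 3 - a 0 - a 1)*z + a 0*(1-a 3) = 0 ↔
        z = u ∨ z = v) := by
    refine ⟨_, _, ?_, fun z => quad_eq_zero_iff hα₁ hδ₁ z⟩
    intro h
    rw [div_eq_div_iff h2α₁ h2α₁] at h
    have h3 := mul_right_cancel₀ h2α₁ h
    exact hδ₁0 (by linear_combination h3/2)
  obtain ⟨s₁, s₂, hsne, hroot2⟩ : ∃ u v : ℂ, u ≠ v ∧ ∀ z : ℂ,
      (a 2*(1-a 4)*z^2 + (a 4 + a 0*a 2*a 4 - a 0 - a 2)*z + a 0*(1-a 4) = 0 ↔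
        z = u ∨ z = v) := by
    refine ⟨_, _, ?_, fun z => quad_eq_zero_iff hα₂ hδ₂ z⟩
    intro h
    rw [div_eq_div_iff h2α₂ h2α₂] at h
    have h3 := mul_right_cancel₀ h2α₂ h
    exact hδ₂0 (by linear_combination h3/2)
  have hfr₁ : a 1*(1-a 3)*r₁^2 + (a 3 + a 0*a 1*a 3 - a 0 - a 1)*r₁ + a 0*(1-a 3) = 0 :=
    (hroot1 r₁).2 (Or.inl rfl)
  have hfr₂ : a 1*(1-a 3)*r₂^2 + (a 3 + a 0*a 1*a 3 - a 0 - a 1)*r₂ + a 0*(1-a 3) = 0 :=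
    (hroot1 r₂).2 (Or.inr rfl)
  have hgs₁ : a 2*(1-a 4)*s₁^2 + (a 4 + a 0*a 2*a 4 - a 0 - a 2)*s₁ + a 0*(1-a 4) = 0 :=
    (hroot2 s₁).2 (Or.inl rfl)
  have hgs₂ : a 2*(1-a 4)*s₂^2 + (a 4 + a 0*a 2*a 4 - a 0 - a 2)*s₂ + a 0*(1-a 4) = 0 :=
    (hroot2 s₂).2 (Or.inr rfl)
  -- every pair of roots gives a point of S
  have hmem : ∀ r s : ℂ,
      a 1*(1-a 3)*r^2 + (a 3 + a 0*a 1*a 3 - a 0 - a 1)*r + a 0*(1-a 3) = 0 →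
      a 2*(1-a 4)*s^2 + (a 4 + a 0*a 2*a 4 - a 0 - a 2)*s + a 0*(1-a 4) = 0 →
      Pt (a 0) (a 1) (a 2) r s ∈ S := by
    intro r s hfr hgs
    obtain ⟨hr0, hr1, hrA, hBr1, hBrA, hBrr⟩ := root_facts hA0 hA1 hB0 hB1 hD0 hD1 hfr
    obtain ⟨hs0, hs1, hsA, hCs1, hCsA, hCss⟩ := root_facts hA0 hA1 hC0 hC1 hE0 hE1 hgs
    have hfr3 : a 1*(1-a 3)*(a 1*r)^2 + a 1*(a 3 + a 0*a 1*a 3 - a 0 - a 1)*(a 1*r) +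
        (a 1)^2*(a 0*(1-a 3)) = 0 := by linear_combination (a 1)^2*hfr
    have hrs : r ≠ s := fun h => res_ne hF3 hfr (by rw [h]; exact hgs)
    have hrCs : r ≠ a 2*s := fun h =>
      res_ne hF4 hfr (by rw [h]; linear_combination (a 2)^2*hgs)
    have hBrs : a 1*r ≠ s := fun h => res_ne hF5 hfr3 (by rw [h]; exact hgs)
    have hBrCs : a 1*r ≠ a 2*s := fun h =>
      res_ne hF6 hfr3 (by rw [h]; linear_combination (a 2)^2*hgs)
    rw [hS]
    simp only [Set.mem_setOf_eq]
    refine ⟨Pt_injective hA0 hA1 hr0 hr1 hrA (mul_ne_zero hB0 hr0) hBr1 hBrA hBrr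
      hs0 hs1 hsA (Ne.symm hrs) (Ne.symm hBrs) (mul_ne_zero hC0 hs0) hCs1 hCsA
      (Ne.symm hrCs) (Ne.symm hBrCs) hCss, rfl, rfl, rfl, ?_, ?_, ?_, ?_, ?_⟩
    · show CR ∞ ((0:ℂ) : OnePoint ℂ) ((1:ℂ) : OnePoint ℂ) ((a 0 : ℂ) : OnePoint ℂ) = a 0
      rw [CR_inf]
      simp
    · show CR ∞ ((0:ℂ) : OnePoint ℂ) ((r : ℂ) : OnePoint ℂ) ((a 1*r : ℂ) : OnePoint ℂ) = a 1
      rw [CR_inf, sub_zero, sub_zero]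
      exact mul_div_cancel_right₀ _ hr0
    · show CR ∞ ((0:ℂ) : OnePoint ℂ) ((s : ℂ) : OnePoint ℂ) ((a 2*s : ℂ) : OnePoint ℂ) = a 2
      rw [CR_inf, sub_zero, sub_zero]
      exact mul_div_cancel_right₀ _ hs0
    · show CR ((1:ℂ) : OnePoint ℂ) ((a 0 : ℂ) : OnePoint ℂ) ((r : ℂ) : OnePoint ℂ)
        ((a 1*r : ℂ) : OnePoint ℂ) = a 3
      rw [CR_fin, div_eq_iff (mul_ne_zero (sub_ne_zero_of_ne hrA) (sub_ne_zero_of_ne hBr1))]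
      linear_combination hfr
    · show CR ((1:ℂ) : OnePoint ℂ) ((a 0 : ℂ) : OnePoint ℂ) ((s : ℂ) : OnePoint ℂ)
        ((a 2*s : ℂ) : OnePoint ℂ) = a 4
      rw [CR_fin, div_eq_iff (mul_ne_zero (sub_ne_zero_of_ne hsA) (sub_ne_zero_of_ne hCs1))]
      linear_combination hgs
  -- S is exactly the four points
  have hset : S = insert (Pt (a 0) (a 1) (a 2) r₁ s₁) (insert (Pt (a 0) (a 1) (a 2) r₁ s₂)
      (insert (Pt (a 0) (a 1) (a 2) r₂ s₁) {Pt (a 0) (a 1) (a 2) r₂ s₂})) := by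
    apply Set.ext
    intro p
    constructor
    · intro hp
      rw [hS] at hp
      obtain ⟨hinj, h0, h1, h2, e1, e2, e3, e4, e5⟩ := hp
      have h3ne : p 3 ≠ ∞ := fun h => absurd (hinj (h.trans h0.symm)) (by decide)
      have h4ne : p 4 ≠ ∞ := fun h => absurd (hinj (h.trans h0.symm)) (by decide)
      have h5ne : p 5 ≠ ∞ := fun h => absurd (hinj (h.trans h0.symm)) (by decide)
      have h6ne : p 6 ≠ ∞ := fun h => absurd (hinj (h.trans h0.symm)) (by decide)
      have h7ne : p 7 ≠ ∞ := fun h => absurd (hinj (h.trans h0.symm)) (by decide)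
      obtain ⟨u, hu⟩ := OnePoint.ne_infty_iff_exists.1 h3ne
      obtain ⟨v, hv⟩ := OnePoint.ne_infty_iff_exists.1 h4ne
      obtain ⟨w, hw⟩ := OnePoint.ne_infty_iff_exists.1 h5ne
      obtain ⟨m, hm⟩ := OnePoint.ne_infty_iff_exists.1 h6ne
      obtain ⟨n, hn⟩ := OnePoint.ne_infty_iff_exists.1 h7ne
      rw [h0, h1, h2, ← hu, CR_inf] at e1
      have hu' : u = a 0 := by simpa using e1
      rw [h0, h1, ← hv, ← hw, CR_inf] at e2
      have hv0 : v ≠ 0 := fun h =>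
        (by decide : (4:Fin 8) ≠ 1) (hinj (by rw [← hv, h1, h]))
      have hw' : w = a 1 * v := by
        rw [sub_zero, sub_zero, div_eq_iff hv0] at e2
        linear_combination e2
      rw [h0, h1, ← hm, ← hn, CR_inf] at e3
      have hm0 : m ≠ 0 := fun h =>
        (by decide : (6:Fin 8) ≠ 1) (hinj (by rw [← hm, h1, h]))
      have hn' : n = a 2 * m := by
        rw [sub_zero, sub_zero, div_eq_iff hm0] at e3
        linear_combination e3
      rw [h2, ← hu, ← hv, ← hw, CR_fin] at e4
      rw [h2, ← hu, ← hm, ← hn, CR_fin] at e5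
      have hvu : v ≠ u := fun h =>
        (by decide : (4:Fin 8) ≠ 3) (hinj (by rw [← hv, ← hu, h]))
      have hw1 : w ≠ 1 := fun h =>
        (by decide : (5:Fin 8) ≠ 2) (hinj (by rw [← hw, h2, h]))
      have hmu : m ≠ u := fun h =>
        (by decide : (6:Fin 8) ≠ 3) (hinj (by rw [← hm, ← hu, h]))
      have hn1 : n ≠ 1 := fun h =>
        (by decide : (7:Fin 8) ≠ 2) (hinj (by rw [← hn, h2, h]))
      subst hu'
      subst hw'
      subst hn'
      rw [div_eq_iff (mul_ne_zero (sub_ne_zero_of_ne hvu) (sub_ne_zero_of_ne hw1))] at e4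
      rw [div_eq_iff (mul_ne_zero (sub_ne_zero_of_ne hmu) (sub_ne_zero_of_ne hn1))] at e5
      have hrootv : a 1*(1-a 3)*v^2 + (a 3 + a 0*a 1*a 3 - a 0 - a 1)*v + a 0*(1-a 3) = 0 := by
        linear_combination e4
      have hrootm : a 2*(1-a 4)*m^2 + (a 4 + a 0*a 2*a 4 - a 0 - a 2)*m + a 0*(1-a 4) = 0 := by
        linear_combination e5
      have hp_eq : p = Pt (a 0) (a 1) (a 2) v m := by
        funext i
        fin_cases i
        · exact h0
        · exact h1
        · exact h2
        · exact hu.symm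
        · exact hv.symm
        · exact hw.symm
        · exact hm.symm
        · exact hn.symm
      rw [hp_eq]
      rcases (hroot1 v).1 hrootv with rfl | rfl <;> rcases (hroot2 m).1 hrootm with rfl | rfl <;>
        simp [Set.mem_insert_iff]
    · intro hp
      simp only [Set.mem_insert_iff, Set.mem_singleton_iff] at hp
      rcases hp with rfl | rfl | rfl | rfl
      · exact hmem r₁ s₁ hfr₁ hgs₁
      · exact hmem r₁ s₂ hfr₁ hgs₂
      · exact hmem r₂ s₁ hfr₂ hgs₁
      · exact hmem r₂ s₂ hfr₂ hgs₂
  have hnm1 : Pt (a 0) (a 1) (a 2) r₁ s₁ ∉ insert (Pt (a 0) (a 1) (a 2) r₁ s₂)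
      (insert (Pt (a 0) (a 1) (a 2) r₂ s₁) ({Pt (a 0) (a 1) (a 2) r₂ s₂} :
        Set (Fin 8 → OnePoint ℂ))) := by
    simp only [Set.mem_insert_iff, Set.mem_singleton_iff]
    push_neg
    exact ⟨Pt_ne (Or.inr hsne), Pt_ne (Or.inl hrne), Pt_ne (Or.inl hrne)⟩
  have hnm2 : Pt (a 0) (a 1) (a 2) r₁ s₂ ∉
      insert (Pt (a 0) (a 1) (a 2) r₂ s₁) ({Pt (a 0) (a 1) (a 2) r₂ s₂} :
        Set (Fin 8 → OnePoint ℂ)) := by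
    simp only [Set.mem_insert_iff, Set.mem_singleton_iff]
    push_neg
    exact ⟨Pt_ne (Or.inl hrne), Pt_ne (Or.inl hrne)⟩
  have hnm3 : Pt (a 0) (a 1) (a 2) r₂ s₁ ∉ ({Pt (a 0) (a 1) (a 2) r₂ s₂} :
      Set (Fin 8 → OnePoint ℂ)) := by
    simp only [Set.mem_singleton_iff]
    exact Pt_ne (Or.inr hsne)
  constructor
  · rw [hset]
    exact Set.Finite.insert _ (Set.Finite.insert _ (Set.Finite.insert _
      (Set.finite_singleton _)))
  · rw [hset, Set.ncard_insert_of_notMem hnm1 (Set.Finite.insert _ (Set.Finite.insert _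
      (Set.finite_singleton _))), Set.ncard_insert_of_notMem hnm2
      (Set.Finite.insert _ (Set.finite_singleton _)),
      Set.ncard_insert_of_notMem hnm3 (Set.finite_singleton _), Set.ncard_singleton]

theorem crossRatioDegree_eq_four_T3 :
    ∃ q : MvPolynomial (Fin 5) ℂ, q ≠ 0 ∧
      ∀ a : Fin 5 → ℂ, (∀ i, a i ≠ 0 ∧ a i ≠ 1) → MvPolynomial.eval a q ≠ 0 →
        let S : Set (Fin 8 → OnePoint ℂ) :=
          {p | Function.Injective p ∧ p 0 = ∞ ∧ p 1 = ((0 : ℂ) : OnePoint ℂ) ∧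
            p 2 = ((1 : ℂ) : OnePoint ℂ) ∧
            CR (p 0) (p 1) (p 2) (p 3) = a 0 ∧
            CR (p 0) (p 1) (p 4) (p 5) = a 1 ∧
            CR (p 0) (p 1) (p 6) (p 7) = a 2 ∧
            CR (p 2) (p 3) (p 4) (p 5) = a 3 ∧
            CR (p 2) (p 3) (p 6) (p 7) = a 4}
        S.Finite ∧ S.ncard = 4 := by
  refine ⟨bigQ (X 0) (X 1) (X 2) (X 3) (X 4), bigQ_ne_zero, fun a ha hq => ?_⟩
  exact key a ha (by rwa [eval_bigQ] at hq)
end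

section
/- Let T = (e₁,…,e₅) be a list of five 4-tuples of pairwise distinct indices in {1,…,8} covering every index, and suppose some vertex v ∈ {1,…,8} belongs to all five tuples e₁,…,e₅. Then the cross-ratio degree of T is at most 1: there exists a nonzero polynomial q ∈ ℂ[x₁,…,x₅] such that N_T(a) ≤ 1 for every a ∈ (ℂ∖{0,1})⁵ with q(a) ≠ 0. -/
open OnePoint


set_option linter.unnecessarySeqFocus false in
theorem CR_swap12 (z₁ z₂ z₃ z₄ : OnePoint ℂ) : CR z₂ z₁ z₄ z₃ = CR z₁ z₂ z₃ z₄ := by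
  rcases z₁ with _ | a <;> rcases z₂ with _ | b <;> rcases z₃ with _ | c <;> rcases z₄ with _ | d <;>
    simp only [CR] <;> first | ring1 | (rw [← neg_div_neg_eq]; ring1)

set_option linter.unnecessarySeqFocus false in
theorem CR_swap13 (z₁ z₂ z₃ z₄ : OnePoint ℂ) : CR z₃ z₄ z₁ z₂ = CR z₁ z₂ z₃ z₄ := by
  rcases z₁ with _ | a <;> rcases z₂ with _ | b <;> rcases z₃ with _ | c <;> rcases z₄ with _ | d <;>
    simp only [CR] <;> first | ring1 | (rw [← neg_div_neg_eq]; ring1)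

set_option linter.unnecessarySeqFocus false in
theorem CR_swap14 (z₁ z₂ z₃ z₄ : OnePoint ℂ) : CR z₄ z₃ z₂ z₁ = CR z₁ z₂ z₃ z₄ := by
  rw [← CR_swap13, ← CR_swap12]


noncomputable def chart (τ : ℂ) : OnePoint ℂ → ℂ
  | Option.none => 0
  | Option.some z => (z - τ)⁻¹

theorem chart_rel (τ a : ℂ) (B C D : OnePoint ℂ)
    (hB : B ≠ Option.some τ) (hC : C ≠ Option.some τ) (hD : D ≠ Option.some τ)
    (hBC : B ≠ C) (hBD : B ≠ D) (hCD : C ≠ D)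
    (h : CR (Option.some τ) B C D = a) :
    (a - 1) * chart τ B - a * chart τ C + chart τ D = 0 := by
  subst h
  rcases B with _ | b <;> rcases C with _ | c <;> rcases D with _ | d <;>
      simp only [CR, chart]
  · exact absurd rfl hBC
  · exact absurd rfl hBC
  · exact absurd rfl hBD
  · have hc : c - τ ≠ 0 := sub_ne_zero.mpr (fun h' => hC (by rw [h']))
    have hd : d - τ ≠ 0 := sub_ne_zero.mpr (fun h' => hD (by rw [h']))
    field_simp
    ring1
  · exact absurd rfl hCD
  · have hb : b - τ ≠ 0 := sub_ne_zero.mpr (fun h' => hB (by rw [h']))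
    have hd : d - τ ≠ 0 := sub_ne_zero.mpr (fun h' => hD (by rw [h']))
    field_simp
    ring1
  · have hb : b - τ ≠ 0 := sub_ne_zero.mpr (fun h' => hB (by rw [h']))
    have hc : c - τ ≠ 0 := sub_ne_zero.mpr (fun h' => hC (by rw [h']))
    have hcb : c - b ≠ 0 := sub_ne_zero.mpr (fun h' => hBC (by rw [h']))
    field_simp
    ring1
  · have hb : b - τ ≠ 0 := sub_ne_zero.mpr (fun h' => hB (by rw [h']))
    have hc : c - τ ≠ 0 := sub_ne_zero.mpr (fun h' => hC (by rw [h']))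
    have hd : d - τ ≠ 0 := sub_ne_zero.mpr (fun h' => hD (by rw [h']))
    have hcb : c - b ≠ 0 := sub_ne_zero.mpr (fun h' => hBC (by rw [h']))
    field_simp
    ring1

theorem chart_rel_inf (a b c d : ℂ) (hcb : c ≠ b)
    (h : CR Option.none (Option.some b) (Option.some c) (Option.some d) = a) :
    (a - 1) * b - a * c + d = 0 := by
  subst h
  simp only [CR]
  have : c - b ≠ 0 := sub_ne_zero.mpr hcb
  field_simp
  ring1


noncomputable def chartP : OnePoint ℂ → OnePoint ℂ → ℂ
  | _, Option.none => 0
  | Option.none, Option.some z => z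
  | Option.some τ, Option.some z => (z - τ)⁻¹

@[simp] theorem chartP_none_right (t : OnePoint ℂ) : chartP t Option.none = 0 := by
  cases t <;> rfl
@[simp] theorem chartP_none_some (z : ℂ) : chartP Option.none (Option.some z) = z := rfl
@[simp] theorem chartP_some_some (τ z : ℂ) :
    chartP (Option.some τ) (Option.some z) = (z - τ)⁻¹ := rfl

theorem chartP_inj (t z z' : OnePoint ℂ) (hz : z ≠ t) (hz' : z' ≠ t)
    (h : chartP t z = chartP t z') : z = z' := by
  rcases t with _ | τ
  · rcases z with _ | β
    · exact absurd rfl hz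
    · rcases z' with _ | β'
      · exact absurd rfl hz'
      · simp only [chartP_none_some] at h
        rw [h]
  · rcases z with _ | β <;> rcases z' with _ | β'
    · rfl
    · simp only [chartP_none_right, chartP_some_some] at h
      have : β' - τ ≠ 0 := sub_ne_zero.mpr (fun h' => hz' (by rw [h']))
      exact absurd h.symm (inv_ne_zero this)
    · simp only [chartP_none_right, chartP_some_some] at h
      have : β - τ ≠ 0 := sub_ne_zero.mpr (fun h' => hz (by rw [h']))
      exact absurd h (inv_ne_zero this)
    · simp only [chartP_some_some] at h
      have := inv_injective h
      have : β = β' := by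
        have h2 := congrArg (fun x => x + τ) this
        simpa using h2
      rw [this]



theorem chartP_chart (τ : ℂ) (z : OnePoint ℂ) : chartP (Option.some τ) z = chart τ z := by
  rcases z with _ | w <;> rfl

theorem chartP_rel (t B C D : OnePoint ℂ) (a : ℂ)
    (hB : B ≠ t) (hC : C ≠ t) (hD : D ≠ t)
    (hBC : B ≠ C) (hBD : B ≠ D) (hCD : C ≠ D)
    (h : CR t B C D = a) :
    (a - 1) * chartP t B - a * chartP t C + chartP t D = 0 := by
  rcases t with _ | τ
  · rcases B with _ | β
    · exact absurd rfl hB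
    rcases C with _ | γ
    · exact absurd rfl hC
    rcases D with _ | δ
    · exact absurd rfl hD
    simp only [chartP_none_some]
    exact chart_rel_inf a β γ δ (fun h' => hBC (by rw [h'])) h
  · rw [chartP_chart, chartP_chart, chartP_chart]
    exact chart_rel τ a B C D hB hC hD hBC hBD hCD h


open Submodule Module Set Matrix


variable {K V : Type*} [Field K] [AddCommGroup V] [Module K V] [FiniteDimensional K V]

theorem finrank_sup_le' (s t : Submodule K V) :
    finrank K ↥(s ⊔ t) ≤ finrank K ↥s + finrank K ↥t := by
  have := Submodule.finrank_sup_add_finrank_inf_eq s t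
  omega

theorem rado_aux {ι : Type*} [Fintype ι] [DecidableEq ι] [DecidableEq V] (X : ι → Set V)
    (hline : ∀ i x y, x ∈ X i → y ∈ X i → x ≠ y → X i ⊆ span K {x, y})
    (h2 : ∀ i, ∃ x ∈ X i, ∃ y ∈ X i, x ≠ y) :
    ∀ (n : ℕ) (J : Finset ι) (C : Finset V), J.card = n →
      finrank K (span K (C : Set V)) = C.card →
      (∀ J' : Finset ι, J' ⊆ J → J'.Nonempty →
        J'.card + C.card ≤ finrank K (span K ((⋃ i ∈ J', X i) ∪ (C : Set V)))) →
      ∃ f : ι → V, (∀ i ∈ J, f i ∈ X i) ∧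
        J.card + C.card ≤ finrank K (span K ((f '' (J : Set ι)) ∪ (C : Set V))) := by
  intro n
  induction n with
  | zero =>
    intro J C hJcard hC _
    refine ⟨fun _ => 0, ?_, ?_⟩
    · intro i hi
      exact absurd (Finset.card_eq_zero.mp hJcard ▸ hi) (Finset.notMem_empty i)
    · have : C.card ≤ finrank K (span K (((fun _ => (0:V)) '' (J : Set ι)) ∪ (C : Set V))) :=
        hC ▸ Submodule.finrank_mono (span_mono Set.subset_union_right)
      omega
  | succ n IH =>
    intro J C hJcard hC hcond
    obtain ⟨i1, hi1⟩ := Finset.card_pos.mp (by omega : 0 < J.card)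
    set J₀ := J.erase i1 with hJ₀
    have hJ₀card : J₀.card = n := by rw [hJ₀, Finset.card_erase_of_mem hi1, hJcard]; omega
    have hJinsert : insert i1 J₀ = J := Finset.insert_erase hi1
    by_cases hgood : ∃ x ∈ X i1,
        finrank K (span K (insert x (C : Set V))) = C.card + 1 ∧
        ∀ J' : Finset ι, J' ⊆ J₀ → J'.Nonempty →
          J'.card + (C.card + 1) ≤ finrank K (span K ((⋃ i ∈ J', X i) ∪ insert x (C : Set V)))
    · obtain ⟨x, hxX, hxrank, hxcond⟩ := hgood
      have hxC : x ∉ C := by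
        intro hxC
        have : insert x (C : Set V) = (C : Set V) :=
          Set.insert_eq_of_mem (Finset.mem_coe.mpr hxC)
        rw [this] at hxrank
        omega
      have hC'card : (insert x C).card = C.card + 1 := Finset.card_insert_of_notMem hxC
      have hC'set : ((insert x C : Finset V) : Set V) = insert x (C : Set V) := by simp
      obtain ⟨f, hfmem, hfrank⟩ := IH J₀ (insert x C) hJ₀card (by rw [hC'set, hC'card, hxrank])
        (by intro J' hJ' hJ'ne; rw [hC'set, hC'card]; exact hxcond J' hJ' hJ'ne)
      refine ⟨Function.update f i1 x, ?_, ?_⟩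
      · intro i hi
        rcases eq_or_ne i i1 with rfl | hne
        · simpa using hxX
        · rw [Function.update_of_ne hne]
          exact hfmem i (Finset.mem_erase.mpr ⟨hne, hi⟩)
      · have himage : (Function.update f i1 x) '' (J : Set ι) = insert x (f '' (J₀ : Set ι)) := by
          rw [← hJinsert]
          push_cast
          rw [Set.image_insert_eq, Function.update_self]
          congr 1
          apply Set.image_congr
          intro i hi
          have : i ≠ i1 := by
            simp only [J₀, Finset.coe_erase, Set.mem_diff, Set.mem_singleton_iff] at hi
            exact hi.2
          rw [Function.update_of_ne this]
        rw [himage]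
        have hseteq : insert x (f '' (J₀ : Set ι)) ∪ (C : Set V)
            = (f '' (J₀ : Set ι)) ∪ ((insert x C : Finset V) : Set V) := by
          rw [hC'set, Set.insert_union, Set.union_insert]
        rw [hseteq]
        have := hfrank
        rw [hC'card] at this
        omega
    · -- bad case : derive contradiction
      exfalso
      obtain ⟨x, hxX, y, hyX, hxy⟩ := h2 i1
      have badP : ∀ z ∈ X i1, ∃ J' : Finset ι, J' ⊆ J₀ ∧
          finrank K (span K ((⋃ i ∈ J', X i) ∪ insert z (C : Set V))) ≤ J'.card + C.card := by
        intro z hz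
        by_cases hzrank : finrank K (span K (insert z (C : Set V))) = C.card + 1
        · by_cases hzcond : ∀ J' : Finset ι, J' ⊆ J₀ → J'.Nonempty →
              J'.card + (C.card + 1) ≤ finrank K (span K ((⋃ i ∈ J', X i) ∪ insert z (C : Set V)))
          · exact absurd ⟨z, hz, hzrank, hzcond⟩ hgood
          · push_neg at hzcond
            obtain ⟨J', hJ'sub, hJ'ne, hJ'rank⟩ := hzcond
            exact ⟨J', hJ'sub, by omega⟩
        · refine ⟨∅, Finset.empty_subset _, ?_⟩
          have hemp : (⋃ i ∈ (∅ : Finset ι), X i) = (∅ : Set V) := by simp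
          rw [hemp, Set.empty_union, Finset.card_empty, zero_add]
          have hle : finrank K (span K (insert z (C : Set V))) ≤ C.card + 1 := by
            rw [Set.insert_eq, span_union]
            refine le_trans (finrank_sup_le' _ _) ?_
            have h1 : finrank K (span K ({z} : Set V)) ≤ 1 := by
              rcases eq_or_ne z 0 with rfl | hz0
              · rw [Submodule.span_zero_singleton]; simp
              · rw [finrank_span_singleton hz0]
            omega
          have hge : C.card ≤ finrank K (span K (insert z (C : Set V))) := by
            rw [← hC]
            exact Submodule.finrank_mono (span_mono (Set.subset_insert _ _))
          omega
      obtain ⟨Jx, hJxsub, hJxrank⟩ := badP x hxX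
      obtain ⟨Jy, hJysub, hJyrank⟩ := badP y hyX
      set A := span K ((⋃ i ∈ Jx, X i) ∪ insert x (C : Set V)) with hA
      set B := span K ((⋃ i ∈ Jy, X i) ∪ insert y (C : Set V)) with hB
      have hinf : span K ((⋃ i ∈ (Jx ∩ Jy), X i) ∪ (C : Set V)) ≤ A ⊓ B := by
        apply span_le.mpr
        intro w hw
        simp only [SetLike.mem_coe, Submodule.mem_inf]
        rcases hw with hw | hw
        · rw [Set.mem_iUnion₂] at hw
          obtain ⟨i, hi, hwXi⟩ := hw
          constructor
          · exact subset_span (Set.mem_union_left _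
              (Set.mem_biUnion (Finset.mem_of_mem_inter_left hi) hwXi))
          · exact subset_span (Set.mem_union_left _
              (Set.mem_biUnion (Finset.mem_of_mem_inter_right hi) hwXi))
        · exact ⟨subset_span (Set.mem_union_right _ (Set.mem_insert_of_mem _ hw)),
            subset_span (Set.mem_union_right _ (Set.mem_insert_of_mem _ hw))⟩
      have hinfrank : (Jx ∩ Jy).card + C.card ≤ finrank K ↥(A ⊓ B) := by
        rcases (Jx ∩ Jy).eq_empty_or_nonempty with hemp | hne
        · rw [hemp]
          simp only [Finset.card_empty, zero_add]
          rw [← hC]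
          refine Submodule.finrank_mono (le_trans ?_ hinf)
          exact span_mono Set.subset_union_right
        · refine le_trans (hcond (Jx ∩ Jy)
            (le_trans Finset.inter_subset_left (le_trans hJxsub (Finset.erase_subset _ _))) hne)
            (Submodule.finrank_mono hinf)
      have hxA : x ∈ A := subset_span (Set.mem_union_right _ (Set.mem_insert _ _))
      have hyB : y ∈ B := subset_span (Set.mem_union_right _ (Set.mem_insert _ _))
      set Jst := insert i1 (Jx ∪ Jy) with hJst
      have hJstJ : Jst ⊆ J := by
        apply Finset.insert_subset hi1
        exact le_trans (Finset.union_subset hJxsub hJysub) (Finset.erase_subset _ _)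
      have hsup : span K ((⋃ i ∈ Jst, X i) ∪ (C : Set V)) ≤ A ⊔ B := by
        apply span_le.mpr
        intro w hw
        simp only [SetLike.mem_coe]
        rcases hw with hw | hw
        · rw [Set.mem_iUnion₂] at hw
          obtain ⟨i, hi, hwXi⟩ := hw
          rcases Finset.mem_insert.mp hi with rfl | hi'
          · have hxy_le : span K ({x, y} : Set V) ≤ A ⊔ B := by
              apply span_le.mpr
              intro u hu
              rcases hu with rfl | hu
              · exact SetLike.mem_coe.mpr (Submodule.mem_sup_left hxA)
              · rcases hu with rfl
                exact SetLike.mem_coe.mpr (Submodule.mem_sup_right hyB)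
            exact hxy_le (hline i x y hxX hyX hxy hwXi)
          · rcases Finset.mem_union.mp hi' with hix | hiy
            · exact Submodule.mem_sup_left
                (subset_span (Set.mem_union_left _ (Set.mem_biUnion hix hwXi)))
            · exact Submodule.mem_sup_right
                (subset_span (Set.mem_union_left _ (Set.mem_biUnion hiy hwXi)))
        · exact Submodule.mem_sup_left
            (subset_span (Set.mem_union_right _ (Set.mem_insert_of_mem _ hw)))
      have hA_rank : finrank K ↥A ≤ Jx.card + C.card := hJxrank
      have hB_rank : finrank K ↥B ≤ Jy.card + C.card := hJyrank
      have hsupinf := Submodule.finrank_sup_add_finrank_inf_eq A B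
      have hstrank := hcond Jst hJstJ (Finset.insert_nonempty _ _)
      have hsuprank : finrank K (span K ((⋃ i ∈ Jst, X i) ∪ (C : Set V)))
          ≤ finrank K ↥(A ⊔ B) := Submodule.finrank_mono hsup
      have hi1new : i1 ∉ Jx ∪ Jy := by
        intro hmem
        have := Finset.union_subset hJxsub hJysub hmem
        simp [hJ₀] at this
      have hJstcard : Jst.card = (Jx ∪ Jy).card + 1 := Finset.card_insert_of_notMem hi1new
      have hcards := Finset.card_union_add_card_inter Jx Jy
      omega


theorem exists_cols {K : Type*} [Field K] {m n : ℕ} (r : Fin m → Fin n → K)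
    (h : LinearIndependent K r) :
    ∃ cols : Fin m → Fin n, Function.Injective cols ∧
      (Matrix.of fun i j => r i (cols j)).det ≠ 0 := by
  classical
  set M : Matrix (Fin m) (Fin n) K := Matrix.of r with hM
  have hrank : M.rank = m := by
    rw [Matrix.rank_eq_finrank_span_row M]
    have : finrank K (span K (Set.range M)) = Fintype.card (Fin m) := finrank_span_eq_card h
    exact this.trans (Fintype.card_fin m)
  set colfun : Fin n → (Fin m → K) := fun j i => r i j with hcolfun
  have hcolrank : finrank K (span K (Set.range colfun)) = m := by
    have h1 : Matrix.rank Mᵀ = m := by rw [Matrix.rank_transpose]; exact hrank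
    rw [Matrix.rank_eq_finrank_span_row Mᵀ] at h1
    exact h1
  obtain ⟨b, hb₁, hb₂, hb₃⟩ := exists_linearIndependent K (Set.range colfun)
  have hbfin : b.Finite := (Set.finite_range colfun).subset hb₁
  letI := hbfin.fintype
  have hbcard : Fintype.card b = m := by
    have := finrank_span_set_eq_card hb₃
    rw [hb₂, hcolrank] at this
    simpa [Set.toFinset_card] using this.symm
  have hchoice : ∀ z : b, ∃ j : Fin n, colfun j = (z : Fin m → K) := fun z => hb₁ z.2
  choose jmap hjmap using hchoice
  obtain e := (Fintype.equivFinOfCardEq hbcard).symm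
  refine ⟨fun k => jmap (e k), ?_, ?_⟩
  · intro k₁ k₂ hk
    have hk' : jmap (e k₁) = jmap (e k₂) := hk
    have : colfun (jmap (e k₁)) = colfun (jmap (e k₂)) := by rw [hk']
    rw [hjmap, hjmap] at this
    exact e.injective (Subtype.ext this)
  · set Q : Matrix (Fin m) (Fin m) K := Matrix.of fun i k => r i (jmap (e k)) with hQ
    have hcols : ∀ k, Qᵀ k = ((e k : b) : Fin m → K) := by
      intro k
      ext i
      have := congrFun (hjmap (e k)) i
      simpa [hQ, hcolfun] using this
    have hindep : LinearIndependent K fun k => Qᵀ k := by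
      have hb' : LinearIndependent K (fun z : b => (z : Fin m → K)) := hb₃
      have := hb'.comp e e.injective
      convert this using 1
      ext k
      rw [hcols k]
      rfl
    have hunit : IsUnit Q := Matrix.linearIndependent_cols_iff_isUnit.mp hindep
    have := (Matrix.isUnit_iff_isUnit_det Q).mp hunit
    exact IsUnit.ne_zero this


noncomputable def ehat (g w : Fin 8) : Fin 8 → ℂ := if w = g then 0 else Pi.single w 1

noncomputable def dotL (Y : Fin 8 → ℂ) : (Fin 8 → ℂ) →ₗ[ℂ] ℂ where
  toFun := fun r => ∑ w, r w * Y w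
  map_add' := fun x y => by simp [add_mul, Finset.sum_add_distrib]
  map_smul' := fun c x => by simp [Finset.mul_sum, mul_assoc]

theorem dotL_ehat (Y : Fin 8 → ℂ) (g x : Fin 8) (hYg : Y g = 0) :
    dotL Y (ehat g x) = Y x := by
  rcases eq_or_ne x g with rfl | hxg
  · simp [dotL, ehat, hYg]
  · simp only [dotL, ehat, if_neg hxg, LinearMap.coe_mk, AddHom.coe_mk]
    rw [Finset.sum_eq_single x]
    · simp
    · intro w _ hw
      rw [Pi.single_eq_of_ne hw]
      ring
    · intro h; exact absurd (Finset.mem_univ x) h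

theorem ehat_apply_ne (g x w : Fin 8) (hxw : x ≠ w) : ehat g x w = 0 := by
  rcases eq_or_ne x g with rfl | hxg
  · simp [ehat]
  · simp [ehat, if_neg hxg, Pi.single_eq_of_ne (Ne.symm hxw)]

theorem generic_det (uvec wvec : Fin 5 → Fin 8 → ℂ) {m : ℕ} (emb : Fin m → Fin 5)
    (s : Fin 5 → ℂ)
    (hind : LinearIndependent ℂ (fun t => uvec (emb t) + s (emb t) • wvec (emb t))) :
    ∃ cols : Fin m → Fin 8, Function.Injective cols ∧ ∃ q : MvPolynomial (Fin 5) ℂ, q ≠ 0 ∧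
      ∀ a : Fin 5 → ℂ, MvPolynomial.eval a q ≠ 0 →
        (Matrix.of fun t j => (uvec (emb t) + a (emb t) • wvec (emb t)) (cols j)).det ≠ 0 := by
  obtain ⟨cols, hinj, hdet⟩ := exists_cols _ hind
  set Mq : Matrix (Fin m) (Fin m) (MvPolynomial (Fin 5) ℂ) := Matrix.of fun t j =>
    MvPolynomial.C (uvec (emb t) (cols j)) +
      MvPolynomial.X (emb t) * MvPolynomial.C (wvec (emb t) (cols j)) with hMq
  have hevaldet : ∀ a : Fin 5 → ℂ, MvPolynomial.eval a Mq.det =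
      (Matrix.of fun t j => (uvec (emb t) + a (emb t) • wvec (emb t)) (cols j)).det := by
    intro a
    rw [RingHom.map_det]
    congr 1
    ext t j
    simp [hMq, RingHom.mapMatrix_apply, Matrix.map_apply, Pi.smul_apply, smul_eq_mul,
      Pi.add_apply]
  refine ⟨cols, hinj, Mq.det, ?_, ?_⟩
  · intro h0
    apply hdet
    have := hevaldet s
    rw [h0] at this
    simpa using this.symm
  · intro a ha
    rw [← hevaldet a]
    exact ha


set_option maxRecDepth 8000 in
theorem core (v g : Fin 8) (hgv : g ≠ v) (bt ct dt : Fin 5 → Fin 8)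
    (hbv : ∀ i, bt i ≠ v) (hcv : ∀ i, ct i ≠ v) (hdv : ∀ i, dt i ≠ v)
    (hbc : ∀ i, bt i ≠ ct i) (hbd : ∀ i, bt i ≠ dt i) (hcd : ∀ i, ct i ≠ dt i) :
    ∃ q : MvPolynomial (Fin 5) ℂ, q ≠ 0 ∧
      ∀ a : Fin 5 → ℂ, MvPolynomial.eval a q ≠ 0 →
      ∀ Y Y' : Fin 8 → ℂ,
        Y v = 0 → Y g = 0 → Y' v = 0 → Y' g = 0 →
        (∀ w w', w ≠ v → w' ≠ v → Y w = Y w' → w = w') →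
        (∀ w w', w ≠ v → w' ≠ v → Y' w = Y' w' → w = w') →
        (∀ i, (a i - 1) * Y (bt i) - a i * Y (ct i) + Y (dt i) = 0) →
        (∀ i, (a i - 1) * Y' (bt i) - a i * Y' (ct i) + Y' (dt i) = 0) →
        ∃ lam : ℂ, lam ≠ 0 ∧ Y' = lam • Y := by
  classical
  set uv : Fin 5 → Fin 8 → ℂ := fun i => ehat g (dt i) - ehat g (bt i) with huv_def
  set wv : Fin 5 → Fin 8 → ℂ := fun i => ehat g (bt i) - ehat g (ct i) with hwv_def
  have hehat_v : ∀ x : Fin 8, x ≠ v → ehat g x v = 0 := fun x hx => ehat_apply_ne g x v hx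
  have hehat_g : ∀ x : Fin 8, ehat g x g = 0 := by
    intro x
    rcases eq_or_ne x g with rfl | hxg
    · simp [ehat]
    · exact ehat_apply_ne g x g hxg
  have huv : ∀ i, uv i v = 0 := by
    intro i; simp [huv_def, hehat_v _ (hdv i), hehat_v _ (hbv i)]
  have hwv : ∀ i, wv i v = 0 := by
    intro i; simp [hwv_def, hehat_v _ (hbv i), hehat_v _ (hcv i)]
  have hug : ∀ i, uv i g = 0 := by intro i; simp [huv_def, hehat_g]
  have hwg : ∀ i, wv i g = 0 := by intro i; simp [hwv_def, hehat_g]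
  have hwv_ne : ∀ i, wv i ≠ 0 := by
    intro i h
    rcases eq_or_ne (ct i) g with hcg | hcg
    · have hval := congrFun h (bt i)
      simp only [hwv_def, Pi.sub_apply, Pi.zero_apply] at hval
      rw [ehat_apply_ne g (ct i) (bt i) (Ne.symm (hbc i))] at hval
      have hbg : bt i ≠ g := fun hb => (hbc i) (hb.trans hcg.symm)
      simp [ehat, if_neg hbg] at hval
    · have hval := congrFun h (ct i)
      simp only [hwv_def, Pi.sub_apply, Pi.zero_apply] at hval
      rw [ehat_apply_ne g (bt i) (ct i) (hbc i)] at hval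
      simp [ehat, if_neg hcg] at hval
  set X : Fin 5 → Set (Fin 8 → ℂ) := fun i => Set.range (fun t : ℂ => uv i + t • wv i) with hX
  have hline : ∀ i (x y : Fin 8 → ℂ), x ∈ X i → y ∈ X i → x ≠ y → X i ⊆ span ℂ {x, y} := by
    intro i x y hx hy hxy z hz
    obtain ⟨s, rfl⟩ := hx
    obtain ⟨t, rfl⟩ := hy
    obtain ⟨r, rfl⟩ := hz
    have hst : s ≠ t := by rintro rfl; exact hxy rfl
    rw [SetLike.mem_coe, Submodule.mem_span_pair]
    refine ⟨1 - (r - s)/(t - s), (r - s)/(t - s), ?_⟩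
    have h1 : (t : ℂ) - s ≠ 0 := sub_ne_zero.mpr (Ne.symm hst)
    ext w
    simp only [Pi.add_apply, Pi.smul_apply, smul_eq_mul]
    field_simp
    ring
  have h2 : ∀ i, ∃ x ∈ X i, ∃ y ∈ X i, x ≠ y := by
    intro i
    refine ⟨uv i, ⟨0, by simp⟩, uv i + wv i, ⟨1, by simp⟩, ?_⟩
    intro h
    exact hwv_ne i (by have := congrArg (fun z => z - uv i) h; simpa using this.symm)
  -- dot product facts
  have hdotu : ∀ (Y : Fin 8 → ℂ), Y g = 0 → ∀ i, dotL Y (uv i) = Y (dt i) - Y (bt i) := by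
    intro Y hYg i
    rw [huv_def]
    simp only [map_sub, dotL_ehat Y g _ hYg]
  have hdotw : ∀ (Y : Fin 8 → ℂ), Y g = 0 → ∀ i, dotL Y (wv i) = Y (bt i) - Y (ct i) := by
    intro Y hYg i
    rw [hwv_def]
    simp only [map_sub, dotL_ehat Y g _ hYg]
  have hdotrow : ∀ (a : Fin 5 → ℂ) (Y : Fin 8 → ℂ), Y g = 0 →
      (∀ i, (a i - 1) * Y (bt i) - a i * Y (ct i) + Y (dt i) = 0) →
      ∀ i, dotL Y (uv i + a i • wv i) = 0 := by
    intro a Y hYg heq i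
    rw [map_add, _root_.map_smul, hdotu Y hYg, hdotw Y hYg]
    have := heq i
    simp only [smul_eq_mul]
    linear_combination this
  by_cases hdef : ∃ J : Finset (Fin 5), J.Nonempty ∧
      finrank ℂ (span ℂ (⋃ i ∈ J, X i)) < J.card
  · -- degenerate branch : generically no valid Y exists
    obtain ⟨J, hJmem, hJmin⟩ := Finset.exists_min_image
      (Finset.univ.filter fun J : Finset (Fin 5) => J.Nonempty ∧
        finrank ℂ (span ℂ (⋃ i ∈ J, X i)) < J.card) Finset.card
      (by obtain ⟨J, hJ⟩ := hdef; exact ⟨J, by simpa using hJ⟩)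
    simp only [Finset.mem_filter, Finset.mem_univ, true_and] at hJmem
    obtain ⟨hJne, hJrank⟩ := hJmem
    obtain ⟨i1, hi1⟩ := hJne
    set J₀ := J.erase i1 with hJ₀def
    have hJ₀card : J₀.card = J.card - 1 := Finset.card_erase_of_mem hi1
    have hJcard_pos : 0 < J.card := Finset.card_pos.mpr ⟨i1, hi1⟩
    -- rado on J₀
    obtain ⟨f, hfmem, hfrank⟩ := rado_aux X hline h2 J₀.card J₀ ∅ rfl
      (by simp)
      (by
        intro J' hJ'sub hJ'ne
        have hJ'lt : J'.card < J.card := by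
          have h1 : J'.card ≤ J₀.card := Finset.card_le_card hJ'sub
          omega
        rw [Finset.coe_empty, Set.union_empty, Finset.card_empty, add_zero]
        by_contra hcon
        push_neg at hcon
        have hmem' := hJmin J' (by
          simp only [Finset.mem_filter, Finset.mem_univ, true_and]
          exact ⟨hJ'ne, hcon⟩)
        omega)
    rw [Finset.card_empty, add_zero, Finset.coe_empty, Set.union_empty] at hfrank
    -- choose scalars
    have hsel : ∀ i, ∃ t : ℂ, i ∈ J₀ → f i = uv i + t • wv i := by
      intro i
      by_cases hi : i ∈ J₀
      · obtain ⟨t, ht⟩ := hfmem i hi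
        exact ⟨t, fun _ => ht.symm⟩
      · exact ⟨0, fun h => absurd h hi⟩
    choose sc hsc using hsel
    -- enumeration of J₀
    set m := J₀.card with hm
    set emb : Fin m → Fin 5 := fun t => ((J₀.orderIsoOfFin rfl) t : Fin 5) with hemb
    have hembmem : ∀ t, emb t ∈ J₀ := fun t => ((J₀.orderIsoOfFin rfl) t).2
    have hembinj : Function.Injective emb :=
      fun t₁ t₂ h => (J₀.orderIsoOfFin rfl).injective (Subtype.ext h)
    have hrange : Set.range (fun t => f (emb t)) = f '' (J₀ : Set (Fin 5)) := by
      ext z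
      constructor
      · rintro ⟨t, rfl⟩
        exact ⟨emb t, hembmem t, rfl⟩
      · rintro ⟨i, hi, rfl⟩
        obtain ⟨t, ht⟩ := (J₀.orderIsoOfFin rfl).surjective ⟨i, hi⟩
        exact ⟨t, by rw [hemb]; simp [ht]⟩
    -- W and its rank
    set W := span ℂ (⋃ i ∈ J, X i) with hW
    have hfsubW : f '' (J₀ : Set (Fin 5)) ⊆ W := by
      rintro z ⟨i, hi, rfl⟩
      apply subset_span
      exact Set.mem_biUnion (Finset.mem_of_mem_erase hi) (hfmem i hi)
    have hWrank : finrank ℂ ↥W ≤ m := by omega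
    have hspanval : finrank ℂ (span ℂ (Set.range fun t => f (emb t))) = m := by
      rw [hrange]
      refine le_antisymm (le_trans (Submodule.finrank_mono (span_le.mpr hfsubW)) hWrank) ?_
      simpa using hfrank
    have find : LinearIndependent ℂ (fun t => f (emb t)) := by
      rw [linearIndependent_iff_card_eq_finrank_span]
      simpa [Set.finrank] using hspanval.symm
    have hfemb : (fun t => f (emb t)) = fun t => uv (emb t) + sc (emb t) • wv (emb t) := by
      funext t; exact hsc (emb t) (hembmem t)
    rw [hfemb] at find
    obtain ⟨cols, hcolinj, q, hq0, hqdet⟩ := generic_det uv wv emb sc find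
    refine ⟨q, hq0, ?_⟩
    intro a ha Y Y' hYv hYg hY'v hY'g hYinj hY'inj heq heq'
    exfalso
    set ra : Fin m → Fin 8 → ℂ := fun t => uv (emb t) + a (emb t) • wv (emb t) with hra
    have hdet := hqdet a ha
    have hsquare : LinearIndependent ℂ
        (fun t => (Matrix.of fun t' j => ra t' (cols j)) t) := by
      refine (Matrix.linearIndependent_rows_iff_isUnit (A := Matrix.of fun t' j => ra t' (cols j))).mpr ?_
      exact (Matrix.isUnit_iff_isUnit_det _).mpr (isUnit_iff_ne_zero.mpr hdet)
    have hra_ind : LinearIndependent ℂ ra :=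
      LinearIndependent.of_comp (LinearMap.funLeft ℂ ℂ cols) hsquare
    have hraW : span ℂ (Set.range ra) ≤ W := by
      rw [span_le]
      rintro z ⟨t, rfl⟩
      exact subset_span (Set.mem_biUnion (Finset.mem_of_mem_erase (hembmem t))
        ⟨a (emb t), rfl⟩)
    have hrarank : finrank ℂ (span ℂ (Set.range ra)) = m := by
      rw [finrank_span_eq_card hra_ind]; simp
    have hWeq : span ℂ (Set.range ra) = W :=
      Submodule.eq_of_le_of_finrank_le hraW (by omega)
    have hXW : X i1 ⊆ ↑W := fun z hz => subset_span (Set.mem_biUnion hi1 hz)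
    have hker : W ≤ LinearMap.ker (dotL Y) := by
      rw [← hWeq, span_le]
      rintro z ⟨t, rfl⟩
      simp only [SetLike.mem_coe, LinearMap.mem_ker]
      exact hdotrow a Y hYg heq (emb t)
    have hu0 : dotL Y (uv i1) = 0 := by
      have h1 : uv i1 ∈ X i1 := ⟨0, by simp⟩
      exact LinearMap.mem_ker.mp (hker (hXW h1))
    have huw0 : dotL Y (uv i1 + wv i1) = 0 := by
      have h1 : uv i1 + (1:ℂ) • wv i1 ∈ X i1 := ⟨1, rfl⟩
      have := LinearMap.mem_ker.mp (hker (hXW h1))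
      simpa using this
    have hbd0 : Y (dt i1) - Y (bt i1) = 0 := by
      rw [← hdotu Y hYg i1, hu0]
    exact hbd i1 (hYinj (bt i1) (dt i1) (hbv i1) (hdv i1)
      (by have := sub_eq_zero.mp hbd0; rw [this]))
  · -- nondegenerate branch
    push_neg at hdef
    obtain ⟨f, hfmem, hfrank⟩ := rado_aux X hline h2 5 Finset.univ ∅ (by simp) (by simp)
      (by
        intro J' _ hJ'ne
        rw [Finset.coe_empty, Set.union_empty, Finset.card_empty, add_zero]
        exact hdef J' hJ'ne)
    rw [Finset.card_empty, add_zero, Finset.coe_empty, Set.union_empty, Finset.coe_univ,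
      Set.image_univ, Finset.card_univ, Fintype.card_fin] at hfrank
    have hsel : ∀ i, ∃ t : ℂ, f i = uv i + t • wv i := fun i => by
      obtain ⟨t, ht⟩ := hfmem i (Finset.mem_univ i)
      exact ⟨t, ht.symm⟩
    choose sc hsc using hsel
    have hle5 : finrank ℂ (span ℂ (Set.range f)) ≤ 5 := by
      have hseteq : Set.range f = ↑(Finset.univ.image f) := by
        rw [Finset.coe_image, Finset.coe_univ, Set.image_univ]
      rw [hseteq]
      refine le_trans (finrank_span_finset_le_card _) (le_trans Finset.card_image_le ?_)
      simp
    have hind : LinearIndependent ℂ f := by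
      rw [linearIndependent_iff_card_eq_finrank_span]
      have : finrank ℂ (span ℂ (Set.range f)) = 5 := le_antisymm hle5 hfrank
      simpa [Set.finrank] using this.symm
    have hfid : f = fun t : Fin 5 => uv (id t) + sc (id t) • wv (id t) := by
      funext t; exact hsc t
    rw [hfid] at hind
    obtain ⟨cols, hcolinj, q, hq0, hqdet⟩ := generic_det uv wv id sc hind
    simp only [id_eq] at hqdet
    refine ⟨q, hq0, ?_⟩
    intro a ha Y Y' hYv hYg hY'v hY'g hYinj hY'inj heq heq'
    set ra : Fin 5 → Fin 8 → ℂ := fun i => uv i + a i • wv i with hra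
    set N : Matrix (Fin 5) (Fin 5) ℂ := Matrix.of fun i j => ra i (cols j) with hN
    have hdet : N.det ≠ 0 := hqdet a ha
    have hNinj : Function.Injective N.mulVec :=
      Matrix.mulVec_injective_iff_isUnit.mpr
        ((Matrix.isUnit_iff_isUnit_det _).mpr (isUnit_iff_ne_zero.mpr hdet))
    have hrav : ∀ i, ra i v = 0 := by intro i; simp [hra, huv, hwv]
    have hrag : ∀ i, ra i g = 0 := by intro i; simp [hra, hug, hwg]
    have hcolv : ∀ j, cols j ≠ v := by
      intro j hj
      apply hdet
      apply Matrix.det_eq_zero_of_column_eq_zero j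
      intro i
      show ra i (cols j) = 0
      rw [hj]; exact hrav i
    have hcolg : ∀ j, cols j ≠ g := by
      intro j hj
      apply hdet
      apply Matrix.det_eq_zero_of_column_eq_zero j
      intro i
      show ra i (cols j) = 0
      rw [hj]; exact hrag i
    set F : Finset (Fin 8) := insert v (insert g (Finset.univ.image cols)) with hF
    have hvni : v ∉ insert g (Finset.univ.image cols) := by
      simp only [Finset.mem_insert, Finset.mem_image, Finset.mem_univ, true_and]
      push_neg
      exact ⟨Ne.symm hgv, fun j => fun h => hcolv j h⟩
    have hgni : g ∉ Finset.univ.image cols := by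
      simp only [Finset.mem_image, Finset.mem_univ, true_and]
      push_neg
      exact fun j h => hcolg j h
    have hFcard : F.card = 7 := by
      rw [hF, Finset.card_insert_of_notMem hvni, Finset.card_insert_of_notMem hgni,
        Finset.card_image_of_injective _ hcolinj]
      simp
    have hFccard : Fᶜ.card = 1 := by
      rw [Finset.card_compl, hFcard]
      simp
    obtain ⟨j0, hj0⟩ := Finset.card_eq_one.mp hFccard
    have hcover : ∀ w : Fin 8, w ∉ F → w = j0 := by
      intro w hw
      have : w ∈ Fᶜ := Finset.mem_compl.mpr hw
      rw [hj0] at this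
      simpa using this
    have hsplit : ∀ G : Fin 8 → ℂ, G v = 0 → G g = 0 →
        ∑ w, G w = (∑ j, G (cols j)) + G j0 := by
      intro G hGv hGg
      have h1 : ∑ w ∈ F, G w = ∑ j, G (cols j) := by
        rw [hF, Finset.sum_insert hvni, Finset.sum_insert hgni, hGv, hGg,
          Finset.sum_image (fun x _ y _ h => hcolinj h)]
        simp
      have h2 := Finset.sum_add_sum_compl F G
      rw [hj0, Finset.sum_singleton, h1] at h2
      exact h2.symm
    have hdots : ∀ (Z : Fin 8 → ℂ), Z g = 0 →
        (∀ i, (a i - 1) * Z (bt i) - a i * Z (ct i) + Z (dt i) = 0) →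
        ∀ i, ∑ w, ra i w * Z w = 0 := by
      intro Z hZg hZeq i
      have := hdotrow a Z hZg hZeq i
      simpa [dotL, hra] using this
    have hmv : ∀ (Z : Fin 8 → ℂ), Z v = 0 → Z g = 0 →
        (∀ i, (a i - 1) * Z (bt i) - a i * Z (ct i) + Z (dt i) = 0) →
        N.mulVec (fun j => Z (cols j)) = fun i => -(ra i j0 * Z j0) := by
      intro Z hZv hZg hZeq
      funext i
      have hs := hsplit (fun w => ra i w * Z w)
        (by show ra i v * Z v = 0; rw [hrav i]; ring)
        (by show ra i g * Z g = 0; rw [hrag i]; ring)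
      have h0 := hdots Z hZg hZeq i
      rw [hs] at h0
      show ∑ j, N i j * Z (cols j) = -(ra i j0 * Z j0)
      have hNij : ∀ j, N i j = ra i (cols j) := fun j => rfl
      simp only [hNij]
      linear_combination h0
    have hmvY := hmv Y hYv hYg heq
    have hmvY' := hmv Y' hY'v hY'g heq'
    have hkey : N.mulVec (Y' j0 • fun j => Y (cols j)) = N.mulVec (Y j0 • fun j => Y' (cols j)) := by
      rw [Matrix.mulVec_smul, Matrix.mulVec_smul, hmvY, hmvY']
      funext i
      simp only [Pi.smul_apply, smul_eq_mul]
      ring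
    have hYc := hNinj hkey
    have hallw : ∀ w, Y' j0 * Y w = Y j0 * Y' w := by
      intro w
      by_cases hwF : w ∈ F
      · rw [hF] at hwF
        rcases Finset.mem_insert.mp hwF with rfl | hwF'
        · rw [hYv, hY'v]; ring
        rcases Finset.mem_insert.mp hwF' with rfl | hwim
        · rw [hYg, hY'g]; ring
        · obtain ⟨j, _, rfl⟩ := Finset.mem_image.mp hwim
          have := congrFun hYc j
          simpa using this
      · rw [hcover w hwF]; ring
    have hzero_imp : ∀ (Z : Fin 8 → ℂ), Z v = 0 → Z g = 0 →
        (N.mulVec (fun j => Z (cols j)) = fun i => -(ra i j0 * Z j0)) → Z j0 = 0 →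
        ∀ w, Z w = 0 := by
      intro Z hZv hZg hZmv hZj0 w
      have hZc0 : (fun j => Z (cols j)) = 0 := by
        apply hNinj
        rw [hZmv, Matrix.mulVec_zero]
        funext i
        simp [hZj0]
      by_cases hwF : w ∈ F
      · rw [hF] at hwF
        rcases Finset.mem_insert.mp hwF with rfl | hwF'
        · exact hZv
        rcases Finset.mem_insert.mp hwF' with rfl | hwim
        · exact hZg
        · obtain ⟨j, _, rfl⟩ := Finset.mem_image.mp hwim
          exact congrFun hZc0 j
      · rw [hcover w hwF]; exact hZj0
    have hcollide : ∀ (Z : Fin 8 → ℂ), (∀ w w', w ≠ v → w' ≠ v → Z w = Z w' → w = w') →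
        ¬ (∀ w, Z w = 0) := by
      intro Z hZinj hZall
      set w₁ : Fin 8 := if v = 0 then 1 else 0 with hw₁
      set w₂ : Fin 8 := if v = 2 then 3 else 2 with hw₂
      have hw₁v : w₁ ≠ v := by
        rw [hw₁]; split_ifs with h
        · rw [h]; decide
        · exact Ne.symm h
      have hw₂v : w₂ ≠ v := by
        rw [hw₂]; split_ifs with h
        · rw [h]; decide
        · exact Ne.symm h
      have hw12 : w₁ ≠ w₂ := by
        rw [hw₁, hw₂]
        split_ifs <;> decide
      exact hw12 (hZinj w₁ w₂ hw₁v hw₂v (by rw [hZall w₁, hZall w₂]))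
    have hYj0 : Y j0 ≠ 0 := by
      intro h0
      exact hcollide Y hYinj (hzero_imp Y hYv hYg hmvY h0)
    have hY'j0 : Y' j0 ≠ 0 := by
      intro h0
      exact hcollide Y' hY'inj (hzero_imp Y' hY'v hY'g hmvY' h0)
    refine ⟨Y' j0 / Y j0, div_ne_zero hY'j0 hYj0, ?_⟩
    funext w
    have hw := hallw w
    show Y' w = Y' j0 / Y j0 * Y w
    rw [div_mul_eq_mul_div, eq_div_iff hYj0]
    linear_combination -hw


/-- If some vertex belongs to all five tuples of the datum, the cross-ratio degree
is at most 1. -/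
theorem crossRatioDegree_le_one_of_vertex_in_all
    (T : Fin 5 → Fin 4 → Fin 8)
    (hT : ∀ i, Function.Injective (T i))
    (hcov : ∀ v : Fin 8, ∃ i j, T i j = v)
    (hv : ∃ v : Fin 8, ∀ i, ∃ j, T i j = v) :
    ∃ q : MvPolynomial (Fin 5) ℂ, q ≠ 0 ∧
      ∀ a : Fin 5 → ℂ, (∀ i, a i ≠ 0 ∧ a i ≠ 1) → MvPolynomial.eval a q ≠ 0 →
        let S : Set (Fin 8 → OnePoint ℂ) :=
          {p | Function.Injective p ∧ p 0 = ∞ ∧ p 1 = ((0 : ℂ) : OnePoint ℂ) ∧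
            p 2 = ((1 : ℂ) : OnePoint ℂ) ∧
            ∀ i, CR (p (T i 0)) (p (T i 1)) (p (T i 2)) (p (T i 3)) = a i}
        S.Finite ∧ S.ncard ≤ 1 := by
  classical
  obtain ⟨v, hv⟩ := hv
  choose jsel hjsel using hv
  set g : Fin 8 := if v = 0 then 1 else 0 with hg
  have hgv : g ≠ v := by
    rw [hg]; split_ifs with h
    · rw [h]; decide
    · exact Ne.symm h
  set bt : Fin 5 → Fin 8 := fun i =>
    if jsel i = 0 then T i 1 else if jsel i = 1 then T i 0
    else if jsel i = 2 then T i 3 else T i 2 with hbt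
  set ct : Fin 5 → Fin 8 := fun i =>
    if jsel i = 0 then T i 2 else if jsel i = 1 then T i 3
    else if jsel i = 2 then T i 0 else T i 1 with hct
  set dt : Fin 5 → Fin 8 := fun i =>
    if jsel i = 0 then T i 3 else if jsel i = 1 then T i 2
    else if jsel i = 2 then T i 1 else T i 0 with hdt
  have hTne : ∀ i (k l : Fin 4), k ≠ l → T i k ≠ T i l := fun i k l hkl h => hkl (hT i h)
  have hfin4 : ∀ j : Fin 4, j = 0 ∨ j = 1 ∨ j = 2 ∨ j = 3 := by decide
  have htrip : ∀ i,
      (jsel i = 0 → bt i = T i 1 ∧ ct i = T i 2 ∧ dt i = T i 3) ∧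
      (jsel i = 1 → bt i = T i 0 ∧ ct i = T i 3 ∧ dt i = T i 2) ∧
      (jsel i = 2 → bt i = T i 3 ∧ ct i = T i 0 ∧ dt i = T i 1) ∧
      (jsel i = 3 → bt i = T i 2 ∧ ct i = T i 1 ∧ dt i = T i 0) := by
    intro i
    refine ⟨fun h => ?_, fun h => ?_, fun h => ?_, fun h => ?_⟩ <;>
      refine ⟨?_, ?_, ?_⟩ <;> simp [hbt, hct, hdt, h]
  have hprops : ∀ i, bt i ≠ v ∧ ct i ≠ v ∧ dt i ≠ v ∧
      bt i ≠ ct i ∧ bt i ≠ dt i ∧ ct i ≠ dt i := by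
    intro i
    have hvi := hjsel i
    rcases hfin4 (jsel i) with h | h | h | h <;> rw [h] at hvi
    · obtain ⟨h1, h2, h3⟩ := (htrip i).1 h
      rw [h1, h2, h3]
      refine ⟨?_, ?_, ?_, ?_, ?_, ?_⟩ <;>
        first
          | (rw [← hvi]; exact hTne i _ _ (by decide))
          | exact hTne i _ _ (by decide)
    · obtain ⟨h1, h2, h3⟩ := (htrip i).2.1 h
      rw [h1, h2, h3]
      refine ⟨?_, ?_, ?_, ?_, ?_, ?_⟩ <;>
        first
          | (rw [← hvi]; exact hTne i _ _ (by decide))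
          | exact hTne i _ _ (by decide)
    · obtain ⟨h1, h2, h3⟩ := (htrip i).2.2.1 h
      rw [h1, h2, h3]
      refine ⟨?_, ?_, ?_, ?_, ?_, ?_⟩ <;>
        first
          | (rw [← hvi]; exact hTne i _ _ (by decide))
          | exact hTne i _ _ (by decide)
    · obtain ⟨h1, h2, h3⟩ := (htrip i).2.2.2 h
      rw [h1, h2, h3]
      refine ⟨?_, ?_, ?_, ?_, ?_, ?_⟩ <;>
        first
          | (rw [← hvi]; exact hTne i _ _ (by decide))
          | exact hTne i _ _ (by decide)
  obtain ⟨q, hq0, hqmain⟩ := core v g hgv bt ct dt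
    (fun i => (hprops i).1) (fun i => (hprops i).2.1) (fun i => (hprops i).2.2.1)
    (fun i => (hprops i).2.2.2.1) (fun i => (hprops i).2.2.2.2.1)
    (fun i => (hprops i).2.2.2.2.2)
  refine ⟨q, hq0, ?_⟩
  intro a _ hqa
  intro S
  have hsub : S.Subsingleton := by
    intro p hp p' hp'
    obtain ⟨hpinj, hp0, hp1, hp2, hpeq⟩ := hp
    obtain ⟨hp'inj, hp'0, hp'1, hp'2, hp'eq⟩ := hp'
    -- facts about charts
    have hne : ∀ (pp : Fin 8 → OnePoint ℂ), Function.Injective pp →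
        ∀ w w' : Fin 8, w ≠ w' → pp w ≠ pp w' := by
      intro pp hppinj w w' hww h
      exact hww (hppinj h)
    set Yp : Fin 8 → ℂ := fun w => if w = v then 0 else chartP (p v) (p w) with hYp
    set Yp' : Fin 8 → ℂ := fun w => if w = v then 0 else chartP (p' v) (p' w) with hYp'
    -- general properties, done for a generic member pp of S
    have hmain : ∀ (pp : Fin 8 → OnePoint ℂ), Function.Injective pp →
        pp 0 = ∞ → pp 1 = ((0 : ℂ) : OnePoint ℂ) → pp 2 = ((1 : ℂ) : OnePoint ℂ) →
        (∀ i, CR (pp (T i 0)) (pp (T i 1)) (pp (T i 2)) (pp (T i 3)) = a i) →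
        (fun w => if w = v then 0 else chartP (pp v) (pp w)) g = 0 ∧
        (∀ w w', w ≠ v → w' ≠ v →
          (fun w => if w = v then 0 else chartP (pp v) (pp w)) w =
          (fun w => if w = v then 0 else chartP (pp v) (pp w)) w' → w = w') ∧
        (∀ i, (a i - 1) * (fun w => if w = v then 0 else chartP (pp v) (pp w)) (bt i)
          - a i * (fun w => if w = v then 0 else chartP (pp v) (pp w)) (ct i)
          + (fun w => if w = v then 0 else chartP (pp v) (pp w)) (dt i) = 0) := by
      intro pp hppinj hpp0 hpp1 hpp2 hppeq
      set Z : Fin 8 → ℂ := fun w => if w = v then 0 else chartP (pp v) (pp w) with hZ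
      have hZval : ∀ w, w ≠ v → Z w = chartP (pp v) (pp w) := by
        intro w hw; rw [hZ]; simp only [if_neg hw]
      have hZg : Z g = 0 := by
        rw [hZval g hgv]
        rcases eq_or_ne v 0 with hv0 | hv0
        · have : g = (1 : Fin 8) := by rw [hg, if_pos hv0]
          rw [this, hpp1, hv0, hpp0]
          rfl
        · have : g = (0 : Fin 8) := by rw [hg, if_neg hv0]
          rw [this, hpp0]
          exact chartP_none_right _
      have hZinj : ∀ w w', w ≠ v → w' ≠ v → Z w = Z w' → w = w' := by
        intro w w' hw hw' h
        rw [hZval w hw, hZval w' hw'] at h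
        exact hppinj (chartP_inj (pp v) (pp w) (pp w')
          (hne pp hppinj w v hw) (hne pp hppinj w' v hw') h)
      refine ⟨hZg, hZinj, ?_⟩
      intro i
      have hCRv : CR (pp v) (pp (bt i)) (pp (ct i)) (pp (dt i)) = a i := by
        have h := hppeq i
        have hvi := hjsel i
        rcases hfin4 (jsel i) with hj | hj | hj | hj <;> rw [hj] at hvi
        · obtain ⟨h1, h2, h3⟩ := (htrip i).1 hj
          rw [h1, h2, h3, ← hvi]
          exact h
        · obtain ⟨h1, h2, h3⟩ := (htrip i).2.1 hj
          rw [h1, h2, h3, ← hvi]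
          rw [CR_swap12 (pp (T i 0)) (pp (T i 1)) (pp (T i 2)) (pp (T i 3))]
          exact h
        · obtain ⟨h1, h2, h3⟩ := (htrip i).2.2.1 hj
          rw [h1, h2, h3, ← hvi]
          rw [CR_swap13 (pp (T i 0)) (pp (T i 1)) (pp (T i 2)) (pp (T i 3))]
          exact h
        · obtain ⟨h1, h2, h3⟩ := (htrip i).2.2.2 hj
          rw [h1, h2, h3, ← hvi]
          rw [CR_swap14 (pp (T i 0)) (pp (T i 1)) (pp (T i 2)) (pp (T i 3))]
          exact h
      have hrel := chartP_rel (pp v) (pp (bt i)) (pp (ct i)) (pp (dt i)) (a i)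
        (hne pp hppinj (bt i) v (hprops i).1)
        (hne pp hppinj (ct i) v (hprops i).2.1)
        (hne pp hppinj (dt i) v (hprops i).2.2.1)
        (hne pp hppinj (bt i) (ct i) (hprops i).2.2.2.1)
        (hne pp hppinj (bt i) (dt i) (hprops i).2.2.2.2.1)
        (hne pp hppinj (ct i) (dt i) (hprops i).2.2.2.2.2)
        hCRv
      rw [hZval (bt i) (hprops i).1, hZval (ct i) (hprops i).2.1,
        hZval (dt i) (hprops i).2.2.1]
      exact hrel
    obtain ⟨hYg, hYinj, hYeq⟩ := hmain p hpinj hp0 hp1 hp2 hpeq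
    obtain ⟨hY'g, hY'inj, hY'eq⟩ := hmain p' hp'inj hp'0 hp'1 hp'2 hp'eq
    obtain ⟨lam, hlam0, hlamY⟩ := hqmain a hqa Yp Yp'
      (by rw [hYp]; simp) (hYg) (by rw [hYp']; simp) (hY'g) hYinj hY'inj hYeq hY'eq
    have hcoe : ∀ z : ℂ, ((z : ℂ) : OnePoint ℂ) = Option.some z := fun z => rfl
    have hinfty : (∞ : OnePoint ℂ) = Option.none := rfl
    have hYw : ∀ w, Yp' w = lam * Yp w := by
      intro w
      have := congrFun hlamY w
      simpa using this
    have hYpval : ∀ w, w ≠ v → Yp w = chartP (p v) (p w) := by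
      intro w hw; rw [hYp]; simp only [if_neg hw]
    have hYp'val : ∀ w, w ≠ v → Yp' w = chartP (p' v) (p' w) := by
      intro w hw; rw [hYp']; simp only [if_neg hw]
    have hsome : ∀ (pp : Fin 8 → OnePoint ℂ), Function.Injective pp → pp 0 = ∞ →
        v ≠ 0 → ∃ τ, pp v = Option.some τ := by
      intro pp hppinj hpp0 hv0
      rcases h : pp v with _ | τ
      · have hvv : pp v = pp 0 := by rw [h, hpp0, hinfty]
        exact absurd (hppinj hvv) hv0
      · exact ⟨τ, rfl⟩
    have hlam1 : lam = 1 := by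
      rcases eq_or_ne v 0 with hv0 | hv0
      · have h2v : (2 : Fin 8) ≠ v := by rw [hv0]; decide
        have hYp2 : Yp 2 = 1 := by
          rw [hYpval 2 h2v, hv0, hp0, hp2, hinfty, hcoe, chartP_none_some]
        have hYp'2 : Yp' 2 = 1 := by
          rw [hYp'val 2 h2v, hv0, hp'0, hp'2, hinfty, hcoe, chartP_none_some]
        have := hYw 2
        rw [hYp2, hYp'2, mul_one] at this
        exact this.symm
      rcases eq_or_ne v 1 with hv1 | hv1
      · have h2v : (2 : Fin 8) ≠ v := by rw [hv1]; decide
        have hYp2 : Yp 2 = 1 := by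
          rw [hYpval 2 h2v, hv1, hp1, hp2, hcoe, hcoe, chartP_some_some]
          norm_num
        have hYp'2 : Yp' 2 = 1 := by
          rw [hYp'val 2 h2v, hv1, hp'1, hp'2, hcoe, hcoe, chartP_some_some]
          norm_num
        have := hYw 2
        rw [hYp2, hYp'2, mul_one] at this
        exact this.symm
      rcases eq_or_ne v 2 with hv2 | hv2
      · have h1v : (1 : Fin 8) ≠ v := by rw [hv2]; decide
        have hYp1 : Yp 1 = -1 := by
          rw [hYpval 1 h1v, hv2, hp2, hp1, hcoe, hcoe, chartP_some_some]
          norm_num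
        have hYp'1 : Yp' 1 = -1 := by
          rw [hYp'val 1 h1v, hv2, hp'2, hp'1, hcoe, hcoe, chartP_some_some]
          norm_num
        have := hYw 1
        rw [hYp1, hYp'1] at this
        linear_combination this
      · obtain ⟨τ, hτ⟩ := hsome p hpinj hp0 hv0
        obtain ⟨τ', hτ'⟩ := hsome p' hp'inj hp'0 hv0
        have h1v : (1 : Fin 8) ≠ v := fun h => hv1 h.symm
        have h2v : (2 : Fin 8) ≠ v := fun h => hv2 h.symm
        have hY1 : Yp 1 = (0 - τ)⁻¹ := by
          rw [hYpval 1 h1v, hτ, hp1, hcoe, chartP_some_some]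
        have hY2 : Yp 2 = (1 - τ)⁻¹ := by
          rw [hYpval 2 h2v, hτ, hp2, hcoe, chartP_some_some]
        have hY'1 : Yp' 1 = (0 - τ')⁻¹ := by
          rw [hYp'val 1 h1v, hτ', hp'1, hcoe, chartP_some_some]
        have hY'2 : Yp' 2 = (1 - τ')⁻¹ := by
          rw [hYp'val 2 h2v, hτ', hp'2, hcoe, chartP_some_some]
        have hτprop : ∀ (pp : Fin 8 → OnePoint ℂ) (σ : ℂ), Function.Injective pp →
            pp 1 = ((0 : ℂ) : OnePoint ℂ) → pp 2 = ((1 : ℂ) : OnePoint ℂ) →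
            pp v = Option.some σ → σ ≠ 0 ∧ σ ≠ 1 := by
          intro pp σ hppinj hpp1 hpp2 hppv
          constructor
          · intro h
            apply hv1
            apply hppinj
            rw [hppv, hpp1, h, hcoe]
          · intro h
            apply hv2
            apply hppinj
            rw [hppv, hpp2, h, hcoe]
        obtain ⟨hτ0, hτone⟩ := hτprop p τ hpinj hp1 hp2 hτ
        obtain ⟨hτ'0, hτ'one⟩ := hτprop p' τ' hp'inj hp'1 hp'2 hτ'
        have hquad : ∀ σ : ℂ, σ ≠ 0 → σ ≠ 1 →
            (0 - σ)⁻¹ * (1 - σ)⁻¹ = (0 - σ)⁻¹ - (1 - σ)⁻¹ := by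
          intro σ h0 h1
          have hh1 : (1 : ℂ) - σ ≠ 0 := sub_ne_zero.mpr (Ne.symm h1)
          rw [zero_sub, inv_neg]
          field_simp
          ring
        have hYY : Yp 1 * Yp 2 ≠ 0 := by
          rw [hY1, hY2]
          exact mul_ne_zero (inv_ne_zero (sub_ne_zero.mpr (Ne.symm hτ0)))
            (inv_ne_zero (sub_ne_zero.mpr (Ne.symm hτone)))
        have hq1 : Yp 1 * Yp 2 = Yp 1 - Yp 2 := by
          rw [hY1, hY2]; exact hquad τ hτ0 hτone
        have hq2 : Yp' 1 * Yp' 2 = Yp' 1 - Yp' 2 := by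
          rw [hY'1, hY'2]; exact hquad τ' hτ'0 hτ'one
        have e1 := hYw 1
        have e2 := hYw 2
        rw [e1, e2] at hq2
        have hh : lam * lam * (Yp 1 * Yp 2) = lam * (Yp 1 * Yp 2) := by
          calc lam * lam * (Yp 1 * Yp 2) = (lam * Yp 1) * (lam * Yp 2) := by ring
          _ = lam * Yp 1 - lam * Yp 2 := hq2
          _ = lam * (Yp 1 - Yp 2) := by ring
          _ = lam * (Yp 1 * Yp 2) := by rw [hq1]
        have hll := mul_right_cancel₀ hYY hh
        have : lam * lam = lam * 1 := by rw [mul_one]; exact hll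
        exact mul_left_cancel₀ hlam0 this
    have hYeqY : Yp' = Yp := by rw [hlamY, hlam1, one_smul]
    have hpv : p v = p' v := by
      rcases eq_or_ne v 0 with hv0 | hv0
      · rw [hv0, hp0, hp'0]
      rcases eq_or_ne v 1 with hv1 | hv1
      · rw [hv1, hp1, hp'1]
      rcases eq_or_ne v 2 with hv2 | hv2
      · rw [hv2, hp2, hp'2]
      · obtain ⟨τ, hτ⟩ := hsome p hpinj hp0 hv0
        obtain ⟨τ', hτ'⟩ := hsome p' hp'inj hp'0 hv0
        have h1v : (1 : Fin 8) ≠ v := fun h => hv1 h.symm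
        have hY1 : Yp 1 = (0 - τ)⁻¹ := by
          rw [hYpval 1 h1v, hτ, hp1, hcoe, chartP_some_some]
        have hY'1 : Yp' 1 = (0 - τ')⁻¹ := by
          rw [hYp'val 1 h1v, hτ', hp'1, hcoe, chartP_some_some]
        have heq1 : (0 - τ')⁻¹ = (0 - τ)⁻¹ := by
          rw [← hY1, ← hY'1, hYeqY]
        have := inv_injective heq1
        have hττ' : τ = τ' := by
          have h2 := congrArg (fun x => (0 : ℂ) - x) this
          simpa using h2.symm
        rw [hτ, hτ', hττ']
    funext w
    rcases eq_or_ne w v with rfl | hwv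
    · exact hpv
    · have h1 := congrFun hYeqY w
      rw [hYpval w hwv, hYp'val w hwv, ← hpv] at h1
      exact chartP_inj (p v) (p w) (p' w) (hne p hpinj w v hwv)
        (by rw [hpv]; exact hne p' hp'inj w v hwv) h1.symm
  constructor
  · exact hsub.finite
  · rcases Set.eq_empty_or_nonempty S with h | ⟨x, hx⟩
    · rw [h]; simp
    · have : S = {x} := Set.Subsingleton.eq_singleton_of_mem hsub hx
      rw [this, Set.ncard_singleton]
end
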